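/- arXiv:1402.6041 — 6 statements merged into one kernel-verified Lean document; each statement's English description precedes it below -/
import Mathlib

section
/- Let f, g : [0,1] → [0,2] be two nondecreasing functions with ∫₀¹ f(x) dx = ∫₀¹ g(x) dx = 1. Then for any p ∈ [1,∞), (∫₀¹ |f(x) - g(x)|^p dx)^(1/p) ≤ 2^(1 - 1/p). -/
open MeasureTheory Set

private lemma abs_sub_le_aux {a b : ℝ} (ha : a ∈ Set.Icc (0:ℝ) 2) (hb : b ∈ Set.Icc (0:ℝ) 2) :
    |a - b| ≤ a + b - a * b := by
  obtain ⟨ha0, ha2⟩ := ha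
  obtain ⟨hb0, hb2⟩ := hb
  rw [abs_sub_le_iff]
  constructor <;> nlinarith

private lemma rpow_le_aux {t p : ℝ} (hp : 1 ≤ p) (ht0 : 0 ≤ t) (ht2 : t ≤ 2) :
    t ^ p ≤ 2 ^ (p - 1) * t := by
  rcases eq_or_lt_of_le ht0 with h | h
  · rw [← h, Real.zero_rpow (by linarith : p ≠ 0), mul_zero]
  · have h1 : t ^ p = t ^ (p - 1) * t := by
      have h2 := Real.rpow_add h (p - 1) 1
      rw [Real.rpow_one] at h2
      rw [← h2]
      congr 1
      ring
    rw [h1]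
    have h2 : t ^ (p - 1) ≤ 2 ^ (p - 1) :=
      Real.rpow_le_rpow (le_of_lt h) ht2 (by linarith)
    exact mul_le_mul_of_nonneg_right h2 ht0

theorem stmt_0 (f g : ℝ → ℝ)
    (hf_mono : MonotoneOn f (Set.Icc 0 1)) (hg_mono : MonotoneOn g (Set.Icc 0 1))
    (hf_range : ∀ x ∈ Set.Icc (0:ℝ) 1, f x ∈ Set.Icc (0:ℝ) 2)
    (hg_range : ∀ x ∈ Set.Icc (0:ℝ) 1, g x ∈ Set.Icc (0:ℝ) 2)
    (hf_int : ∫ x in (0:ℝ)..1, f x = 1) (hg_int : ∫ x in (0:ℝ)..1, g x = 1)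
    (p : ℝ) (hp : 1 ≤ p) :
    (∫ x in (0:ℝ)..1, |f x - g x| ^ p) ^ (1 / p) ≤ 2 ^ (1 - 1 / p) := by
  have hp0 : (0:ℝ) < p := lt_of_lt_of_le one_pos hp
  set μ : Measure ℝ := volume.restrict (Set.Ioc (0:ℝ) 1) with hμdef
  haveI hprob : IsProbabilityMeasure μ := by
    constructor
    rw [hμdef, Measure.restrict_apply_univ, Real.volume_Ioc]
    norm_num
  have hsub : Set.Ioc (0:ℝ) 1 ⊆ Set.Icc 0 1 := Set.Ioc_subset_Icc_self
  have hae : ∀ᵐ x ∂μ, x ∈ Set.Ioc (0:ℝ) 1 := ae_restrict_mem measurableSet_Ioc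
  have hfm : AEMeasurable f μ :=
    (aemeasurable_restrict_of_monotoneOn measurableSet_Icc hf_mono).mono_measure
      (Measure.restrict_mono hsub le_rfl)
  have hgm : AEMeasurable g μ :=
    (aemeasurable_restrict_of_monotoneOn measurableSet_Icc hg_mono).mono_measure
      (Measure.restrict_mono hsub le_rfl)
  -- integrability of bounded a.e.-measurable functions
  have hbdd : ∀ (h : ℝ → ℝ) (C : ℝ), AEMeasurable h μ → (∀ᵐ x ∂μ, |h x| ≤ C) →
      Integrable h μ := by
    intro h C hm hb
    exact Integrable.mono' (integrable_const C) hm.aestronglyMeasurable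
      (by filter_upwards [hb] with x hx using by simpa using hx)
  have hfb : ∀ᵐ x ∂μ, |f x| ≤ 2 := by
    filter_upwards [hae] with x hx
    obtain ⟨h0, h2⟩ := hf_range x (hsub hx)
    rw [abs_le]; constructor <;> linarith
  have hgb : ∀ᵐ x ∂μ, |g x| ≤ 2 := by
    filter_upwards [hae] with x hx
    obtain ⟨h0, h2⟩ := hg_range x (hsub hx)
    rw [abs_le]; constructor <;> linarith
  have hfi : Integrable f μ := hbdd f 2 hfm hfb
  have hgi : Integrable g μ := hbdd g 2 hgm hgb
  have hfgi : Integrable (fun x => f x * g x) μ := by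
    apply hbdd _ 4 (hfm.mul hgm)
    filter_upwards [hfb, hgb] with x h1 h2
    rw [Pi.mul_apply, abs_mul]
    calc |f x| * |g x| ≤ 2 * 2 := by
          apply mul_le_mul h1 h2 (abs_nonneg _) (by norm_num)
      _ = 4 := by norm_num
  have hIf : ∫ x, f x ∂μ = 1 := by
    rw [← hf_int, intervalIntegral.integral_of_le zero_le_one]
  have hIg : ∫ x, g x ∂μ = 1 := by
    rw [← hg_int, intervalIntegral.integral_of_le zero_le_one]
  set I : ℝ := ∫ x, f x * g x ∂μ with hIdef
  -- Chebyshev's integral inequality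
  have hcheb : (1:ℝ) ≤ I := by
    have hnn : (0:ℝ) ≤ ∫ x, (f x * g x - f x - g x + I) ∂μ := by
      apply integral_nonneg_of_ae
      filter_upwards [hae] with x hx
      simp only [Pi.zero_apply]
      have i1 : Integrable (fun y : ℝ => f x * g x - f x * g y) μ :=
        (integrable_const (f x * g x)).sub (hgi.const_mul (f x))
      have i2 : Integrable (fun y : ℝ => f x * g x - f x * g y - g x * f y) μ :=
        i1.sub (hfi.const_mul (g x))
      have hinner : ∫ y, (f x - f y) * (g x - g y) ∂μ
          = f x * g x - f x - g x + I := by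
        have hexp : (fun y => (f x - f y) * (g x - g y))
            = fun y => f x * g x - f x * g y - g x * f y + f y * g y := by
          funext y; ring
        rw [hexp]
        rw [integral_add i2 hfgi, integral_sub i1 (hfi.const_mul (g x)),
            integral_sub (integrable_const (f x * g x)) (hgi.const_mul (f x)),
            integral_const, integral_const_mul, integral_const_mul, hIf, hIg]
        simp [mul_comm]
        exact hIdef.symm
      rw [← hinner]
      apply integral_nonneg_of_ae
      filter_upwards [hae] with y hy
      simp only [Pi.zero_apply]
      rcases le_total x y with h | h
      · have h1 : f x ≤ f y := hf_mono (hsub hx) (hsub hy) h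
        have h2 : g x ≤ g y := hg_mono (hsub hx) (hsub hy) h
        nlinarith
      · have h1 : f y ≤ f x := hf_mono (hsub hy) (hsub hx) h
        have h2 : g y ≤ g x := hg_mono (hsub hy) (hsub hx) h
        nlinarith
    have hval : ∫ x, (f x * g x - f x - g x + I) ∂μ = 2 * I - 2 := by
      have j1 : Integrable (fun x : ℝ => f x * g x - f x) μ := hfgi.sub hfi
      have j2 : Integrable (fun x : ℝ => f x * g x - f x - g x) μ := j1.sub hgi
      rw [integral_add j2 (integrable_const I), integral_sub j1 hgi,
          integral_sub hfgi hfi, integral_const, hIf, hIg, ← hIdef]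
      simp
      ring
    rw [hval] at hnn
    linarith
  -- pointwise bound
  have h2p : (0:ℝ) < 2 ^ (p - 1) := Real.rpow_pos_of_pos (by norm_num) _
  have hpoint : ∀ᵐ x ∂μ, |f x - g x| ^ p ≤ 2 ^ (p - 1) * (f x + g x - f x * g x) := by
    filter_upwards [hae] with x hx
    have haf := hf_range x (hsub hx)
    have hag := hg_range x (hsub hx)
    have ht2 : |f x - g x| ≤ 2 := by
      rw [abs_le]
      obtain ⟨h1, h2⟩ := haf; obtain ⟨h3, h4⟩ := hag
      constructor <;> linarith
    calc |f x - g x| ^ p ≤ 2 ^ (p - 1) * |f x - g x| :=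
          rpow_le_aux hp (abs_nonneg _) ht2
      _ ≤ 2 ^ (p - 1) * (f x + g x - f x * g x) :=
          mul_le_mul_of_nonneg_left (abs_sub_le_aux haf hag) (le_of_lt h2p)
  -- integrability of |f - g| ^ p
  have hHm : AEMeasurable (fun x => |f x - g x| ^ p) μ :=
    (Real.continuous_rpow_const (by linarith : (0:ℝ) ≤ p)).measurable.comp_aemeasurable
      (measurable_abs.comp_aemeasurable (hfm.sub hgm))
  have hHi : Integrable (fun x => |f x - g x| ^ p) μ := by
    apply hbdd _ (2 ^ p) hHm
    filter_upwards [hae] with x hx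
    have haf := hf_range x (hsub hx)
    have hag := hg_range x (hsub hx)
    have ht2 : |f x - g x| ≤ 2 := by
      rw [abs_le]
      obtain ⟨h1, h2⟩ := haf; obtain ⟨h3, h4⟩ := hag
      constructor <;> linarith
    rw [abs_of_nonneg (Real.rpow_nonneg (abs_nonneg _) p)]
    exact Real.rpow_le_rpow (abs_nonneg _) ht2 (by linarith)
  have hBi : Integrable (fun x => 2 ^ (p - 1) * (f x + g x - f x * g x)) μ :=
    (((hfi.add hgi).sub hfgi).const_mul _)
  have hmain : ∫ x, |f x - g x| ^ p ∂μ ≤ 2 ^ (p - 1) := by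
    calc ∫ x, |f x - g x| ^ p ∂μ
        ≤ ∫ x, 2 ^ (p - 1) * (f x + g x - f x * g x) ∂μ :=
          integral_mono_ae hHi hBi hpoint
      _ = 2 ^ (p - 1) * (1 + 1 - I) := by
          have k1 : Integrable (fun x : ℝ => f x + g x) μ := hfi.add hgi
          rw [integral_const_mul, integral_sub k1 hfgi,
              integral_add hfi hgi, hIf, hIg, ← hIdef]
      _ ≤ 2 ^ (p - 1) * 1 := by
          apply mul_le_mul_of_nonneg_left (by linarith) (le_of_lt h2p)
      _ = 2 ^ (p - 1) := mul_one _
  have hIeq : ∫ x in (0:ℝ)..1, |f x - g x| ^ p = ∫ x, |f x - g x| ^ p ∂μ :=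
    intervalIntegral.integral_of_le zero_le_one
  have hInn : 0 ≤ ∫ x, |f x - g x| ^ p ∂μ :=
    integral_nonneg fun x => Real.rpow_nonneg (abs_nonneg _) p
  rw [hIeq]
  calc (∫ x, |f x - g x| ^ p ∂μ) ^ (1 / p)
      ≤ (2 ^ (p - 1)) ^ (1 / p) :=
        Real.rpow_le_rpow hInn hmain (by positivity)
    _ = 2 ^ ((p - 1) * (1 / p)) := by
        rw [← Real.rpow_mul (by norm_num : (0:ℝ) ≤ 2)]
    _ = 2 ^ (1 - 1 / p) := by
        congr 1
        field_simp
end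

section
/- Let f, g : [0,1] → [0,2] be nondecreasing functions with ∫₀¹ f = ∫₀¹ g = 1. Then ∫₀¹ |f(x) - g(x)| dx ≤ 1. -/
open MeasureTheory Set

theorem stmt_1 (f g : ℝ → ℝ)
    (hf_mono : MonotoneOn f (Set.Icc 0 1)) (hg_mono : MonotoneOn g (Set.Icc 0 1))
    (hf_range : ∀ x ∈ Set.Icc (0:ℝ) 1, f x ∈ Set.Icc (0:ℝ) 2)
    (hg_range : ∀ x ∈ Set.Icc (0:ℝ) 1, g x ∈ Set.Icc (0:ℝ) 2)
    (hf_int : ∫ x in (0:ℝ)..1, f x = 1) (hg_int : ∫ x in (0:ℝ)..1, g x = 1) :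
    ∫ x in (0:ℝ)..1, |f x - g x| ≤ 1 := by
  have hmeas : MeasurableSet (Icc (0:ℝ) 1) := measurableSet_Icc
  have hvol : volume (Icc (0:ℝ) 1) = 1 := by
    rw [Real.volume_Icc]; norm_num
  -- integrabilities
  have hfi : IntegrableOn f (Icc (0:ℝ) 1) volume :=
    hf_mono.integrableOn_isCompact isCompact_Icc
  have hgi : IntegrableOn g (Icc (0:ℝ) 1) volume :=
    hg_mono.integrableOn_isCompact isCompact_Icc
  have haef : ∀ᵐ x ∂(volume.restrict (Icc (0:ℝ) 1)), ‖f x‖ ≤ 2 := by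
    filter_upwards [ae_restrict_mem hmeas] with x hx
    have := hf_range x hx
    rw [Real.norm_eq_abs, abs_le]
    constructor <;> linarith [this.1, this.2]
  have hfgi : IntegrableOn (fun x => f x * g x) (Icc (0:ℝ) 1) volume :=
    Integrable.bdd_mul hgi hfi.aestronglyMeasurable haef
  -- set-integral versions of the hypotheses
  rw [intervalIntegral.integral_of_le zero_le_one] at hf_int hg_int
  have hf1 : ∫ x in Icc (0:ℝ) 1, f x = 1 := by
    rw [integral_Icc_eq_integral_Ioc]; exact hf_int
  have hg1 : ∫ x in Icc (0:ℝ) 1, g x = 1 := by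
    rw [integral_Icc_eq_integral_Ioc]; exact hg_int
  set I : ℝ := ∫ x in Icc (0:ℝ) 1, f x * g x with hI
  -- Chebyshev: I ≥ 1
  have key : ∀ x ∈ Icc (0:ℝ) 1, 0 ≤ f x * g x - f x - g x + I := by
    intro x hx
    have h0 : 0 ≤ ∫ y in Icc (0:ℝ) 1, (f x - f y) * (g x - g y) := by
      apply setIntegral_nonneg hmeas
      intro y hy
      rcases le_total x y with h | h
      · nlinarith [hf_mono hx hy h, hg_mono hx hy h]
      · nlinarith [hf_mono hy hx h, hg_mono hy hx h]
    have hconst : IntegrableOn (fun _ : ℝ => f x * g x) (Icc (0:ℝ) 1) volume := by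
      exact integrableOn_const (by rw [hvol]; exact ENNReal.one_ne_top)
    have h1 : IntegrableOn (fun y => f x * g x - f x * g y) (Icc (0:ℝ) 1) volume :=
      hconst.sub (hgi.const_mul (f x))
    have h2 : IntegrableOn (fun y => f x * g x - f x * g y - g x * f y)
        (Icc (0:ℝ) 1) volume := h1.sub (hfi.const_mul (g x))
    have hexp : (fun y => (f x - f y) * (g x - g y))
        = fun y => f x * g x - f x * g y - g x * f y + f y * g y := by
      funext y; ring
    rw [hexp, integral_add h2 hfgi, integral_sub h1 (hfi.const_mul (g x)),
      integral_sub hconst (hgi.const_mul (f x)), setIntegral_const,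
      integral_const_mul, integral_const_mul, hf1, hg1, measureReal_def, hvol] at h0
    simp only [ENNReal.toReal_one, one_smul, mul_one] at h0
    linarith
  have hIconst : IntegrableOn (fun _ : ℝ => I) (Icc (0:ℝ) 1) volume := by
    exact integrableOn_const (by rw [hvol]; exact ENNReal.one_ne_top)
  have hche : (1:ℝ) ≤ I := by
    have h0 : 0 ≤ ∫ x in Icc (0:ℝ) 1, (f x * g x - f x - g x + I) :=
      setIntegral_nonneg hmeas key
    have h1 : IntegrableOn (fun x => f x * g x - f x) (Icc (0:ℝ) 1) volume :=
      hfgi.sub hfi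
    have h2 : IntegrableOn (fun x => f x * g x - f x - g x) (Icc (0:ℝ) 1) volume :=
      h1.sub hgi
    rw [integral_add h2 hIconst, integral_sub h1 hgi, integral_sub hfgi hfi,
      setIntegral_const, hf1, hg1, measureReal_def, hvol] at h0
    simp only [ENNReal.toReal_one, one_smul, smul_eq_mul] at h0
    linarith
  -- main bound
  have habs : IntegrableOn (fun x => |f x - g x|) (Icc (0:ℝ) 1) volume :=
    (hfi.sub hgi).abs
  have hrhsi : IntegrableOn (fun x => f x + g x - f x * g x) (Icc (0:ℝ) 1) volume :=
    (hfi.add hgi).sub hfgi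
  have hmain : ∫ x in Icc (0:ℝ) 1, |f x - g x|
      ≤ ∫ x in Icc (0:ℝ) 1, (f x + g x - f x * g x) := by
    apply setIntegral_mono_on habs hrhsi hmeas
    intro x hx
    obtain ⟨hf0, hf2⟩ := hf_range x hx
    obtain ⟨hg0, hg2⟩ := hg_range x hx
    rw [abs_le]
    constructor <;> nlinarith
  have hrhs : ∫ x in Icc (0:ℝ) 1, (f x + g x - f x * g x) = 2 - I := by
    have hadd : IntegrableOn (fun x => f x + g x) (Icc (0:ℝ) 1) volume := hfi.add hgi
    rw [integral_sub hadd hfgi, integral_add hfi hgi, hf1, hg1, ← hI]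
    ring
  rw [intervalIntegral.integral_of_le zero_le_one, ← integral_Icc_eq_integral_Ioc]
  calc ∫ x in Icc (0:ℝ) 1, |f x - g x| ≤ 2 - I := by rw [← hrhs]; exact hmain
    _ ≤ 1 := by linarith
end

section
/- Let N ≥ 1 and let α = (α₁,…,α_N), β = (β₁,…,β_N) be vectors in ℝ^N with 0 ≤ α₁ ≤ ⋯ ≤ α_N ≤ 2, 0 ≤ β₁ ≤ ⋯ ≤ β_N ≤ 2, and ∑ᵢ αᵢ = ∑ᵢ βᵢ = N. Then ∑ᵢ |αᵢ − βᵢ| ≤ N. -/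
open Finset

theorem stmt_4 (N : ℕ) (hN : 1 ≤ N) (α β : Fin N → ℝ)
    (hα_mono : Monotone α) (hβ_mono : Monotone β)
    (hα_range : ∀ i, α i ∈ Set.Icc (0:ℝ) 2)
    (hβ_range : ∀ i, β i ∈ Set.Icc (0:ℝ) 2)
    (hα_sum : ∑ i, α i = N) (hβ_sum : ∑ i, β i = N) :
    ∑ i, |α i - β i| ≤ N := by
  set d : Fin N → ℝ := fun i => α i - β i with hd
  have hsum0 : ∑ i, d i = 0 := by
    simp only [hd, Finset.sum_sub_distrib, hα_sum, hβ_sum, sub_self]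
  set P : Finset (Fin N) := univ.filter (fun i => 0 < d i) with hP
  set Q : Finset (Fin N) := univ.filter (fun i => d i < 0) with hQ
  set Z : ℝ := ∑ i ∈ P, d i with hZ
  -- key pairwise inequality
  have key : ∀ i ∈ P, ∀ j ∈ Q, d i - d j ≤ 2 := by
    intro i hi j hj
    rcases le_total i j with h | h
    · have h1 : α i ≤ α j := hα_mono h
      have h2 : β j ≤ 2 := (hβ_range j).2
      have h3 : 0 ≤ β i := (hβ_range i).1
      simp only [hd]; linarith
    · have h1 : β j ≤ β i := hβ_mono h
      have h2 : α i ≤ 2 := (hα_range i).2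
      have h3 : 0 ≤ α j := (hα_range j).1
      simp only [hd]; linarith
  -- sum over Q equals -Z
  have hQsum : ∑ i ∈ Q, d i = -Z := by
    have h1 : ∑ i ∈ P, d i + ∑ i ∈ univ.filter (fun i => ¬ 0 < d i), d i = 0 := by
      rw [hP, Finset.sum_filter_add_sum_filter_not]; exact hsum0
    have h2 : ∑ i ∈ univ.filter (fun i => ¬ 0 < d i), d i = ∑ i ∈ Q, d i := by
      symm
      apply Finset.sum_subset
      · intro x hx
        simp only [hQ, Finset.mem_filter] at hx ⊢
        exact ⟨hx.1, by linarith [hx.2]⟩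
      · intro x hx hxQ
        simp only [hQ, Finset.mem_filter, Finset.mem_univ, true_and] at hx hxQ
        linarith [hx, hxQ]
    rw [h2] at h1
    linarith
  -- total abs sum = 2 Z
  have habs : ∑ i, |d i| = 2 * Z := by
    have h1 : ∑ i, |d i|
        = ∑ i ∈ P, |d i| + ∑ i ∈ univ.filter (fun i => ¬ 0 < d i), |d i| := by
      rw [hP, Finset.sum_filter_add_sum_filter_not]
    have h2 : ∑ i ∈ P, |d i| = Z := by
      apply Finset.sum_congr rfl
      intro i hi
      simp only [hP, Finset.mem_filter] at hi
      exact abs_of_pos hi.2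
    have h3 : ∑ i ∈ univ.filter (fun i => ¬ 0 < d i), |d i| = ∑ i ∈ Q, |d i| := by
      symm
      apply Finset.sum_subset
      · intro x hx
        simp only [hQ, Finset.mem_filter] at hx ⊢
        exact ⟨hx.1, by linarith [hx.2]⟩
      · intro x hx hxQ
        simp only [hQ, Finset.mem_filter, Finset.mem_univ, true_and] at hx hxQ
        have : d x = 0 := le_antisymm (not_lt.mp hx) (not_lt.mp hxQ)
        simp [this]
    have h4 : ∑ i ∈ Q, |d i| = -∑ i ∈ Q, d i := by
      rw [← Finset.sum_neg_distrib]
      apply Finset.sum_congr rfl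
      intro i hi
      simp only [hQ, Finset.mem_filter] at hi
      exact abs_of_neg hi.2
    rw [h1, h2, h3, h4, hQsum]
    ring
  rw [habs]
  have hN0 : (0:ℝ) ≤ N := by positivity
  -- if P or Q empty, Z = 0
  rcases Finset.eq_empty_or_nonempty P with hPe | hPne
  · have hz0 : Z = 0 := by rw [hZ, hPe, Finset.sum_empty]
    rw [hz0]; linarith
  rcases Finset.eq_empty_or_nonempty Q with hQe | hQne
  · have hz0 : Z = 0 := by
      have := hQsum
      rw [hQe, Finset.sum_empty] at this
      linarith
    rw [hz0]; linarith
  -- double counting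
  have hdouble : (Q.card : ℝ) * Z + (P.card : ℝ) * Z ≤ 2 * P.card * Q.card := by
    have h1 : ∑ i ∈ P, ∑ j ∈ Q, (d i - d j) ≤ ∑ i ∈ P, ∑ j ∈ Q, (2:ℝ) := by
      apply Finset.sum_le_sum
      intro i hi
      exact Finset.sum_le_sum (fun j hj => key i hi j hj)
    have h2 : ∑ i ∈ P, ∑ j ∈ Q, (d i - d j)
        = (Q.card : ℝ) * Z + (P.card : ℝ) * Z := by
      calc ∑ i ∈ P, ∑ j ∈ Q, (d i - d j)
          = ∑ i ∈ P, ((Q.card : ℝ) * d i - ∑ j ∈ Q, d j) := by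
            apply Finset.sum_congr rfl
            intro i _
            rw [Finset.sum_sub_distrib, Finset.sum_const, nsmul_eq_mul]
        _ = (Q.card : ℝ) * Z + (P.card : ℝ) * Z := by
            rw [Finset.sum_sub_distrib, ← Finset.mul_sum, Finset.sum_const,
              nsmul_eq_mul, hQsum, ← hZ]
            ring
    have h3 : ∑ i ∈ P, ∑ j ∈ Q, (2:ℝ) = 2 * P.card * Q.card := by
      simp [Finset.sum_const, nsmul_eq_mul]
      ring
    rw [h2, h3] at h1
    exact h1
  -- cardinalities
  have hdisj : Disjoint P Q := by
    rw [Finset.disjoint_left]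
    intro a haP haQ
    simp only [hP, hQ, Finset.mem_filter] at haP haQ
    linarith [haP.2, haQ.2]
  have hcard : (P.card : ℝ) + Q.card ≤ N := by
    have h := Finset.card_le_univ (P ∪ Q)
    rw [Finset.card_union_of_disjoint hdisj, Fintype.card_fin] at h
    exact_mod_cast h
  have hp : (1:ℝ) ≤ P.card := by
    have := Finset.card_pos.mpr hPne; exact_mod_cast this
  have hq : (1:ℝ) ≤ Q.card := by
    have := Finset.card_pos.mpr hQne; exact_mod_cast this
  have hZle : 2 * Z ≤ (P.card : ℝ) + Q.card := by
    nlinarith [sq_nonneg ((P.card : ℝ) - Q.card)]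
  linarith
end

section
/- Define an admissible 2-step function f : [0,1] → [0,2] as one for which there exist a ∈ [0,1/2] and b ∈ [1/2,1] with a < b such that f(x) = 0 for 0 ≤ x < a, f(x) = (2b−1)/(b−a) for a ≤ x < b, and f(x) = 2 for b ≤ x ≤ 1. Then for any two admissible 2-step functions f and g, ∫₀¹ |f(x) − g(x)| dx ≤ 1. -/
/-- An admissible 2-step function on `[0,1]` with values in `[0,2]`. -/
def Admissible2Step (f : ℝ → ℝ) : Prop :=
  ∃ a b : ℝ, a ∈ Set.Icc (0:ℝ) (1/2) ∧ b ∈ Set.Icc (1/2 : ℝ) 1 ∧ a < b ∧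
    ∀ x ∈ Set.Icc (0:ℝ) 1,
      f x = if x < a then 0 else if x < b then (2*b - 1)/(b - a) else 2

open MeasureTheory intervalIntegral Set

noncomputable def stepF (a b : ℝ) : ℝ → ℝ :=
  fun x => if x < a then 0 else if x < b then (2*b - 1)/(b - a) else 2

lemma stepF_meas (a b : ℝ) : Measurable (stepF a b) := by
  unfold stepF
  exact Measurable.ite measurableSet_Iio measurable_const
    (Measurable.ite measurableSet_Iio measurable_const measurable_const)

lemma stepF_mem {a b : ℝ} (ha0 : 0 ≤ a) (ha : a ≤ 1/2) (hb : 1/2 ≤ b) (hab : a < b)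
    (x : ℝ) : stepF a b x ∈ Set.Icc (0:ℝ) 2 := by
  unfold stepF
  split_ifs
  · norm_num
  · refine ⟨div_nonneg (by linarith) (by linarith), ?_⟩
    rw [div_le_iff₀ (by linarith)]
    linarith
  · norm_num

lemma bddII {φ : ℝ → ℝ} (hm : Measurable φ) {C : ℝ} (hC : ∀ x, |φ x| ≤ C) (u v : ℝ) :
    IntervalIntegrable φ volume u v := by
  rw [intervalIntegrable_iff]
  exact (MeasureTheory.integrableOn_const measure_Ioc_lt_top.ne (by simp)).mono'
    hm.aestronglyMeasurable (ae_of_all _ (by simpa [Real.norm_eq_abs] using hC))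

lemma intConst {φ : ℝ → ℝ} {u v k : ℝ} (huv : u ≤ v) (hφ : IntervalIntegrable φ volume u v)
    (h : ∀ x ∈ Set.Ioo u v, φ x = k) : ∫ x in u..v, φ x = k * (v - u) := by
  rw [intervalIntegral.integral_of_le huv, MeasureTheory.integral_Ioc_eq_integral_Ioo,
      MeasureTheory.setIntegral_congr_fun measurableSet_Ioo h, MeasureTheory.setIntegral_const,
      Real.volume_real_Ioo_of_le huv]
  rw [smul_eq_mul, mul_comm]

lemma stepF_abs_le {a b : ℝ} (ha0 : 0 ≤ a) (ha : a ≤ 1/2) (hb : 1/2 ≤ b) (hab : a < b)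
    (x : ℝ) : |stepF a b x| ≤ 2 := by
  have := stepF_mem ha0 ha hb hab x
  rw [abs_le]; exact ⟨by linarith [this.1], this.2⟩

lemma stepF_II (a b : ℝ) (ha0 : 0 ≤ a) (ha : a ≤ 1/2) (hb : 1/2 ≤ b) (hab : a < b)
    (u v : ℝ) : IntervalIntegrable (stepF a b) volume u v :=
  bddII (stepF_meas a b) (stepF_abs_le ha0 ha hb hab) u v

lemma stepF_integral {a b : ℝ} (ha0 : 0 ≤ a) (ha : a ≤ 1/2) (hb : 1/2 ≤ b) (hb1 : b ≤ 1)
    (hab : a < b) : ∫ x in (0:ℝ)..1, stepF a b x = 1 := by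
  have hII := stepF_II a b ha0 ha hb hab
  have e1 : (∫ x in (0:ℝ)..a, stepF a b x) + ∫ x in a..b, stepF a b x = ∫ x in (0:ℝ)..b, stepF a b x :=
    intervalIntegral.integral_add_adjacent_intervals (hII 0 a) (hII a b)
  have e2 : (∫ x in (0:ℝ)..b, stepF a b x) + ∫ x in b..1, stepF a b x = ∫ x in (0:ℝ)..1, stepF a b x :=
    intervalIntegral.integral_add_adjacent_intervals (hII 0 b) (hII b 1)
  have i1 : ∫ x in (0:ℝ)..a, stepF a b x = 0 * (a - 0) :=
    intConst ha0 (hII 0 a) (fun x hx => by simp [stepF, hx.2])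
  have i2 : ∫ x in a..b, stepF a b x = (2*b - 1)/(b - a) * (b - a) :=
    intConst hab.le (hII a b) (fun x hx => by
      simp [stepF, not_lt.2 hx.1.le, hx.2])
  have i3 : ∫ x in b..1, stepF a b x = 2 * (1 - b) :=
    intConst hb1 (hII b 1) (fun x hx => by
      simp [stepF, not_lt.2 (lt_trans hab hx.1).le, not_lt.2 hx.1.le])
  have hm : (2*b - 1)/(b - a) * (b - a) = 2*b - 1 :=
    div_mul_cancel₀ _ (by linarith)
  rw [← e2, ← e1, i1, i2, i3, hm]; ring

lemma key1 {a b c d : ℝ} (h0 : 0 ≤ a) (hac : a ≤ c) (hc : c ≤ 1/2) (hb : 1/2 ≤ b)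
    (hbd : b ≤ d) (hd : d ≤ 1) :
    0 ≤ (2*b-1)*(2*d-1)*(b-c) + 2*(2*d-1)*(d-b)*(b-a) + 4*(1-d)*(b-a)*(d-c) - (b-a)*(d-c) := by
  have hFc : 0 ≤ a*(b-a) - (a+b-1)*(c-a) := by
    rcases le_total (a+b-1) 0 with h | h
    · nlinarith [mul_nonneg h0 (sub_nonneg.2 (hac.trans (le_trans hc hb)))]
    · nlinarith [mul_nonneg h (sub_nonneg.2 hac), mul_nonneg h0 (le_trans (by norm_num) hb)]
  nlinarith [mul_nonneg (by linarith : (0:ℝ) ≤ 2*d-1) hFc,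
    mul_nonneg (mul_nonneg (by linarith : (0:ℝ) ≤ 1-2*c) (by linarith : (0:ℝ) ≤ 1-d))
      (by linarith : (0:ℝ) ≤ b-a)]

lemma key2 {a b d : ℝ} (h0 : 0 ≤ a) (ha : a ≤ 1/2) (hdd : 1/2 ≤ d) (hbd : d ≤ b) (hb : b ≤ 1) :
    0 ≤ (2*b-1)*(2*d-1) + 2*(2*b-1)*(b-d) + 4*(1-b)*(b-a) - (b-a) := by
  nlinarith [sq_nonneg (2*b-1), mul_nonneg h0 (sub_nonneg.2 hb)]

lemma stepFG_ge {a b c d : ℝ} (ha0 : 0 ≤ a) (ha : a ≤ 1/2) (hb : 1/2 ≤ b) (hb1 : b ≤ 1)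
    (hab : a < b) (hc0 : 0 ≤ c) (hc : c ≤ 1/2) (hd : 1/2 ≤ d) (hd1 : d ≤ 1) (hcd : c < d)
    (hac : a ≤ c) :
    1 ≤ ∫ x in (0:ℝ)..1, stepF a b x * stepF c d x := by
  have hφm : Measurable (fun x => stepF a b x * stepF c d x) :=
    (stepF_meas a b).mul (stepF_meas c d)
  have hφb : ∀ x, |stepF a b x * stepF c d x| ≤ 4 := by
    intro x
    rw [abs_mul]
    calc |stepF a b x| * |stepF c d x| ≤ 2 * 2 :=
          mul_le_mul (stepF_abs_le ha0 ha hb hab x) (stepF_abs_le hc0 hc hd hcd x)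
            (abs_nonneg _) (by norm_num)
      _ = 4 := by norm_num
  have hII : ∀ u v : ℝ, IntervalIntegrable (fun x => stepF a b x * stepF c d x) volume u v :=
    fun u v => bddII hφm hφb u v
  have hba : (0:ℝ) < b - a := by linarith
  have hdc : (0:ℝ) < d - c := by linarith
  have hcb : c ≤ b := hc.trans hb
  rcases le_total b d with hbd | hdb
  · -- a ≤ c ≤ b ≤ d
    have e : ∫ x in (0:ℝ)..1, stepF a b x * stepF c d x =
        (∫ x in (0:ℝ)..a, stepF a b x * stepF c d x) +
        (∫ x in a..c, stepF a b x * stepF c d x) +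
        (∫ x in c..b, stepF a b x * stepF c d x) +
        (∫ x in b..d, stepF a b x * stepF c d x) +
        (∫ x in d..1, stepF a b x * stepF c d x) := by
      rw [intervalIntegral.integral_add_adjacent_intervals (hII 0 a) (hII a c),
          intervalIntegral.integral_add_adjacent_intervals (hII 0 c) (hII c b),
          intervalIntegral.integral_add_adjacent_intervals (hII 0 b) (hII b d),
          intervalIntegral.integral_add_adjacent_intervals (hII 0 d) (hII d 1)]
    have i1 : ∫ x in (0:ℝ)..a, stepF a b x * stepF c d x = 0 * (a - 0) :=
      intConst ha0 (hII 0 a) (fun x hx => by simp [stepF, hx.2])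
    have i2 : ∫ x in a..c, stepF a b x * stepF c d x = 0 * (c - a) :=
      intConst hac (hII a c) (fun x hx => by simp [stepF, hx.2])
    have i3 : ∫ x in c..b, stepF a b x * stepF c d x
        = ((2*b - 1)/(b - a) * ((2*d - 1)/(d - c))) * (b - c) :=
      intConst hcb (hII c b) (fun x hx => by
        simp [stepF, not_lt.2 (hac.trans hx.1.le), hx.2, not_lt.2 hx.1.le,
          hx.2.trans_le hbd])
    have i4 : ∫ x in b..d, stepF a b x * stepF c d x = (2 * ((2*d - 1)/(d - c))) * (d - b) :=
      intConst hbd (hII b d) (fun x hx => by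
        simp [stepF, not_lt.2 (hac.trans (hcb.trans hx.1.le)), not_lt.2 hx.1.le,
          not_lt.2 (hcb.trans hx.1.le), hx.2])
    have i5 : ∫ x in d..1, stepF a b x * stepF c d x = (2 * 2) * (1 - d) :=
      intConst hd1 (hII d 1) (fun x hx => by
        simp [stepF, not_lt.2 (hbd.trans hx.1.le), not_lt.2 hx.1.le,
          not_lt.2 (hac.trans (hcb.trans (hbd.trans hx.1.le))),
          not_lt.2 (hcb.trans (hbd.trans hx.1.le))])
    have hP := key1 ha0 hac hc hb hbd hd1
    have hid : (2*b - 1)/(b - a) * ((2*d - 1)/(d - c)) * (b - c)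
        + 2 * ((2*d - 1)/(d - c)) * (d - b) + 2 * 2 * (1 - d) - 1
        = ((2*b-1)*(2*d-1)*(b-c) + 2*(2*d-1)*(d-b)*(b-a) + 4*(1-d)*(b-a)*(d-c)
            - (b-a)*(d-c)) / ((b - a)*(d - c)) := by
      field_simp
      ring
    have hnn : 0 ≤ ((2*b-1)*(2*d-1)*(b-c) + 2*(2*d-1)*(d-b)*(b-a) + 4*(1-d)*(b-a)*(d-c)
        - (b-a)*(d-c)) / ((b - a)*(d - c)) := div_nonneg hP (mul_pos hba hdc).le
    rw [e, i1, i2, i3, i4, i5]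
    linarith [hid, hnn]
  · -- a ≤ c ≤ d ≤ b
    have e : ∫ x in (0:ℝ)..1, stepF a b x * stepF c d x =
        (∫ x in (0:ℝ)..a, stepF a b x * stepF c d x) +
        (∫ x in a..c, stepF a b x * stepF c d x) +
        (∫ x in c..d, stepF a b x * stepF c d x) +
        (∫ x in d..b, stepF a b x * stepF c d x) +
        (∫ x in b..1, stepF a b x * stepF c d x) := by
      rw [intervalIntegral.integral_add_adjacent_intervals (hII 0 a) (hII a c),
          intervalIntegral.integral_add_adjacent_intervals (hII 0 c) (hII c d),
          intervalIntegral.integral_add_adjacent_intervals (hII 0 d) (hII d b),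
          intervalIntegral.integral_add_adjacent_intervals (hII 0 b) (hII b 1)]
    have i1 : ∫ x in (0:ℝ)..a, stepF a b x * stepF c d x = 0 * (a - 0) :=
      intConst ha0 (hII 0 a) (fun x hx => by simp [stepF, hx.2])
    have i2 : ∫ x in a..c, stepF a b x * stepF c d x = 0 * (c - a) :=
      intConst hac (hII a c) (fun x hx => by simp [stepF, hx.2])
    have i3 : ∫ x in c..d, stepF a b x * stepF c d x
        = ((2*b - 1)/(b - a) * ((2*d - 1)/(d - c))) * (d - c) :=
      intConst hcd.le (hII c d) (fun x hx => by
        simp [stepF, not_lt.2 (hac.trans hx.1.le), hx.2.trans_le hdb, not_lt.2 hx.1.le,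
          hx.2])
    have i4 : ∫ x in d..b, stepF a b x * stepF c d x = ((2*b - 1)/(b - a) * 2) * (b - d) :=
      intConst hdb (hII d b) (fun x hx => by
        simp [stepF, not_lt.2 (hac.trans (hcd.le.trans hx.1.le)), hx.2,
          not_lt.2 (hcd.le.trans hx.1.le), not_lt.2 hx.1.le])
    have i5 : ∫ x in b..1, stepF a b x * stepF c d x = (2 * 2) * (1 - b) :=
      intConst hb1 (hII b 1) (fun x hx => by
        simp [stepF, not_lt.2 (hac.trans (hcd.le.trans (hdb.trans hx.1.le))),
          not_lt.2 hx.1.le, not_lt.2 (hcd.le.trans (hdb.trans hx.1.le)),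
          not_lt.2 (hdb.trans hx.1.le)])
    have hQ := key2 ha0 ha hd hdb hb1
    have hid : (2*b - 1)/(b - a) * ((2*d - 1)/(d - c)) * (d - c)
        + (2*b - 1)/(b - a) * 2 * (b - d) + 2 * 2 * (1 - b) - 1
        = ((2*b-1)*(2*d-1) + 2*(2*b-1)*(b-d) + 4*(1-b)*(b-a) - (b-a)) / (b - a) := by
      field_simp
      ring
    have hnn : 0 ≤ ((2*b-1)*(2*d-1) + 2*(2*b-1)*(b-d) + 4*(1-b)*(b-a) - (b-a)) / (b - a) :=
      div_nonneg hQ hba.le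
    rw [e, i1, i2, i3, i4, i5]
    linarith [hid, hnn]



theorem stmt_5 (f g : ℝ → ℝ) (hf : Admissible2Step f) (hg : Admissible2Step g) :
    ∫ x in (0:ℝ)..1, |f x - g x| ≤ 1 := by
  obtain ⟨a, b, ⟨ha0, ha⟩, ⟨hb, hb1⟩, hab, hfe⟩ := hf
  obtain ⟨c, d, ⟨hc0, hc⟩, ⟨hd, hd1⟩, hcd, hge⟩ := hg
  have hFm := stepF_meas a b
  have hGm := stepF_meas c d
  have hIf := stepF_II a b ha0 ha hb hab
  have hIg := stepF_II c d hc0 hc hd hcd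
  have hFb := stepF_abs_le ha0 ha hb hab
  have hGb := stepF_abs_le hc0 hc hd hcd
  have h1 : ∫ x in (0:ℝ)..1, |f x - g x|
      = ∫ x in (0:ℝ)..1, |stepF a b x - stepF c d x| := by
    apply intervalIntegral.integral_congr
    intro x hx
    rw [Set.uIcc_of_le (by norm_num : (0:ℝ) ≤ 1)] at hx
    simp only
    rw [hfe x hx, hge x hx]
    rfl
  have habsI : IntervalIntegrable (fun x => |stepF a b x - stepF c d x|) volume 0 1 :=
    bddII (hFm.sub hGm).abs (C := 4) (fun x => by
      rw [abs_abs]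
      calc |stepF a b x - stepF c d x| ≤ |stepF a b x| + |stepF c d x| := abs_sub _ _
        _ ≤ 4 := by linarith [hFb x, hGb x]) 0 1
  have hFGb : ∀ x, |stepF a b x * stepF c d x| ≤ 4 := fun x => by
    rw [abs_mul]
    calc |stepF a b x| * |stepF c d x| ≤ 2 * 2 :=
        mul_le_mul (hFb x) (hGb x) (abs_nonneg _) (by norm_num)
      _ = 4 := by norm_num
  have hFGI : IntervalIntegrable (fun x => stepF a b x * stepF c d x) volume 0 1 :=
    bddII (hFm.mul hGm) hFGb 0 1
  have hrhsI : IntervalIntegrable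
      (fun x => stepF a b x + stepF c d x - stepF a b x * stepF c d x) volume 0 1 :=
    bddII ((hFm.add hGm).sub (hFm.mul hGm)) (C := 8) (fun x => by
      calc |stepF a b x + stepF c d x - stepF a b x * stepF c d x|
          ≤ |stepF a b x + stepF c d x| + |stepF a b x * stepF c d x| := abs_sub _ _
        _ ≤ (|stepF a b x| + |stepF c d x|) + 4 := by
            linarith [abs_add_le (stepF a b x) (stepF c d x), hFGb x]
        _ ≤ 8 := by linarith [hFb x, hGb x]) 0 1
  have hmono : ∫ x in (0:ℝ)..1, |stepF a b x - stepF c d x|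
      ≤ ∫ x in (0:ℝ)..1, (stepF a b x + stepF c d x - stepF a b x * stepF c d x) := by
    apply intervalIntegral.integral_mono_on (by norm_num : (0:ℝ) ≤ 1) habsI hrhsI
    intro x _
    have hF := stepF_mem ha0 ha hb hab x
    have hG := stepF_mem hc0 hc hd hcd x
    rw [abs_sub_le_iff]
    constructor
    · nlinarith [hF.1, hF.2, hG.1, hG.2]
    · nlinarith [hF.1, hF.2, hG.1, hG.2]
  have hsplit : ∫ x in (0:ℝ)..1, (stepF a b x + stepF c d x - stepF a b x * stepF c d x)
      = (∫ x in (0:ℝ)..1, stepF a b x) + (∫ x in (0:ℝ)..1, stepF c d x)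
        - ∫ x in (0:ℝ)..1, stepF a b x * stepF c d x := by
    rw [intervalIntegral.integral_sub ((hIf 0 1).add (hIg 0 1)) hFGI,
        intervalIntegral.integral_add (hIf 0 1) (hIg 0 1)]
  have hFG1 : 1 ≤ ∫ x in (0:ℝ)..1, stepF a b x * stepF c d x := by
    rcases le_total a c with hac | hca
    · exact stepFG_ge ha0 ha hb hb1 hab hc0 hc hd hd1 hcd hac
    · have h := stepFG_ge hc0 hc hd hd1 hcd ha0 ha hb hb1 hab hca
      have hcomm : ∫ x in (0:ℝ)..1, stepF c d x * stepF a b x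
          = ∫ x in (0:ℝ)..1, stepF a b x * stepF c d x :=
        intervalIntegral.integral_congr (fun x _ => mul_comm _ _)
      linarith
  rw [h1]
  have hif := stepF_integral ha0 ha hb hb1 hab
  have hig := stepF_integral hc0 hc hd hd1 hcd
  calc ∫ x in (0:ℝ)..1, |stepF a b x - stepF c d x|
      ≤ (∫ x in (0:ℝ)..1, stepF a b x) + (∫ x in (0:ℝ)..1, stepF c d x)
        - ∫ x in (0:ℝ)..1, stepF a b x * stepF c d x := by rw [← hsplit]; exact hmono
    _ ≤ 1 := by rw [hif, hig]; linarith
end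

section
/- Let N ≥ 2 and P = {α ∈ ℝ^N : 0 ≤ α₁ ≤ α₂ ≤ ⋯ ≤ α_N ≤ 2 and ∑ᵢ αᵢ = N}. Then the set of extreme points of the compact convex polytope P equals {(0,…,0, a,…,a, 2,…,2) : k zeros, l twos, N−k−l entries equal to a = (N−2l)/(N−k−l), where 0 ≤ k, l and k + l < N and a ∈ [0,2]}. -/
open Finset

lemma down_card {N : ℕ} (S : Finset (Fin N))
    (h : ∀ i j : Fin N, i ≤ j → j ∈ S → i ∈ S) (i : Fin N) :
    i ∈ S ↔ (i : ℕ) < S.card := by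
  constructor
  · intro hi
    have hsub : Finset.Iic i ⊆ S := fun j hj => h j i (Finset.mem_Iic.mp hj) hi
    have := Finset.card_le_card hsub
    rw [Fin.card_Iic] at this
    omega
  · intro hlt
    by_contra hi
    have hsub : S ⊆ Finset.Iio i := by
      intro j hj
      rw [Finset.mem_Iio]
      by_contra hij
      exact hi (h i j (le_of_not_gt hij) hj)
    have := Finset.card_le_card hsub
    rw [Fin.card_Iio] at this
    omega

lemma up_card {N : ℕ} (S : Finset (Fin N))
    (h : ∀ i j : Fin N, i ≤ j → i ∈ S → j ∈ S) (i : Fin N) :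
    i ∈ S ↔ N - S.card ≤ (i : ℕ) := by
  have hc : ∀ j : Fin N, j ∈ Sᶜ ↔ (j : ℕ) < Sᶜ.card := by
    refine down_card _ ?_
    intro a b hab hb
    simp only [Finset.mem_compl] at hb ⊢
    exact fun ha => hb (h a b hab ha)
  have hcard : Sᶜ.card = N - S.card := by
    rw [Finset.card_compl, Fintype.card_fin]
  constructor
  · intro hi
    have : i ∉ Sᶜ := by simp [hi]
    rw [hc, hcard] at this
    omega
  · intro hi
    by_contra hns
    have : i ∈ Sᶜ := Finset.mem_compl.mpr hns
    rw [hc, hcard] at this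
    omega

lemma sum_three {N : ℕ} (k l : ℕ) (hk : k ≤ N - l) (hl : l ≤ N) (f : Fin N → ℝ) (c : ℝ)
    (h0 : ∀ i : Fin N, (i : ℕ) < k → f i = 0)
    (hc : ∀ i : Fin N, k ≤ (i : ℕ) → (i : ℕ) < N - l → f i = c)
    (h2 : ∀ i : Fin N, N - l ≤ (i : ℕ) → f i = 2) :
    ∑ i, f i = ((N - l - k : ℕ) : ℝ) * c + 2 * l := by
  set g : ℕ → ℝ := fun j => if h : j < N then f ⟨j, h⟩ else 0 with hg
  have h1 : ∑ i, f i = ∑ j ∈ Finset.range N, g j := by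
    rw [← Fin.sum_univ_eq_sum_range]
    exact Finset.sum_congr rfl fun i _ => by simp [hg, i.isLt]
  rw [h1, Finset.range_eq_Ico,
    ← Finset.sum_Ico_consecutive g (Nat.zero_le k) (le_trans hk (Nat.sub_le N l)),
    ← Finset.sum_Ico_consecutive g hk (Nat.sub_le N l)]
  have s0 : ∑ j ∈ Finset.Ico 0 k, g j = 0 := by
    apply Finset.sum_eq_zero
    intro j hj
    rw [Finset.mem_Ico] at hj
    have hjN : j < N := by omega
    simp only [hg, dif_pos hjN]
    exact h0 _ hj.2
  have s1 : ∑ j ∈ Finset.Ico k (N - l), g j = ((N - l - k : ℕ) : ℝ) * c := by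
    have he : ∀ j ∈ Finset.Ico k (N - l), g j = c := by
      intro j hj
      rw [Finset.mem_Ico] at hj
      have hjN : j < N := by omega
      simp only [hg, dif_pos hjN]
      exact hc ⟨j, hjN⟩ hj.1 hj.2
    rw [Finset.sum_congr rfl he, Finset.sum_const, Nat.card_Ico, nsmul_eq_mul]
  have s2 : ∑ j ∈ Finset.Ico (N - l) N, g j = 2 * l := by
    have he : ∀ j ∈ Finset.Ico (N - l) N, g j = 2 := by
      intro j hj
      rw [Finset.mem_Ico] at hj
      simp only [hg, dif_pos hj.2]
      exact h2 ⟨j, hj.2⟩ hj.1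
    have h' : N - (N - l) = l := by omega
    rw [Finset.sum_congr rfl he, Finset.sum_const, Nat.card_Ico, h', nsmul_eq_mul]
    ring
  rw [s0, s1, s2]; ring

lemma conv_zero {t s x y : ℝ} (ht : 0 < t) (hs : 0 < s) (hx : 0 ≤ x) (hy : 0 ≤ y)
    (h : t * x + s * y = 0) : x = 0 ∧ y = 0 := by
  have h1 : t * x = 0 := le_antisymm (by nlinarith [mul_nonneg hs.le hy]) (mul_nonneg ht.le hx)
  have h2 : s * y = 0 := by linarith
  constructor
  · rcases mul_eq_zero.mp h1 with h | h
    · exact absurd h (ne_of_gt ht)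
    · exact h
  · rcases mul_eq_zero.mp h2 with h | h
    · exact absurd h (ne_of_gt hs)
    · exact h

lemma conv_two {t s x y : ℝ} (ht : 0 < t) (hs : 0 < s) (hts : t + s = 1)
    (hx : x ≤ 2) (hy : y ≤ 2) (h : t * x + s * y = 2) : x = 2 ∧ y = 2 := by
  have := conv_zero ht hs (by linarith : (0:ℝ) ≤ 2 - x) (by linarith : (0:ℝ) ≤ 2 - y)
    (by nlinarith)
  constructor <;> linarith [this.1, this.2]

lemma conv_eqd {t s a b c d : ℝ} (ht : 0 < t) (hs : 0 < s) (hab : a ≤ b) (hcd : c ≤ d)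
    (h : t * a + s * c = t * b + s * d) : a = b ∧ c = d := by
  have := conv_zero ht hs (by linarith : (0:ℝ) ≤ b - a) (by linarith : (0:ℝ) ≤ d - c)
    (by nlinarith)
  constructor <;> linarith [this.1, this.2]

set_option maxHeartbeats 1000000 in
theorem stmt_17 (N : ℕ) (hN : 2 ≤ N)
    (P : Set (Fin N → ℝ))
    (hP : P = {α : Fin N → ℝ |
      (∀ i, 0 ≤ α i) ∧ (∀ i, α i ≤ 2) ∧ Monotone α ∧ ∑ i, α i = N}) :
    Set.extremePoints ℝ P =
      {α : Fin N → ℝ | ∃ k l : ℕ, k + l < N ∧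
        ((N : ℝ) - 2 * l) / ((N : ℝ) - k - l) ∈ Set.Icc (0:ℝ) 2 ∧
        α = fun i : Fin N => if (i : ℕ) < k then 0
          else if (i : ℕ) < N - l then ((N : ℝ) - 2 * l) / ((N : ℝ) - k - l)
          else 2} := by
  subst hP
  refine Set.Subset.antisymm ?_ ?_
  · -- extreme points are of the given form
      classical
      intro α hα
      rw [mem_extremePoints] at hα
      obtain ⟨⟨hlb, hub, hmono, hsum⟩, hext⟩ := hα
      set Z : Finset (Fin N) := univ.filter (fun i => α i = 0) with hZdef
      set T : Finset (Fin N) := univ.filter (fun i => α i = 2) with hTdef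
      set k := Z.card with hk
      set l := T.card with hl
      have hZ : ∀ i : Fin N, α i = 0 ↔ (i : ℕ) < k := by
        intro i
        rw [show (α i = 0) ↔ i ∈ Z by simp [hZdef]]
        exact down_card Z (by
          intro i j hij hj
          simp only [hZdef, mem_filter, mem_univ, true_and] at hj ⊢
          have := hmono hij
          have := hlb i
          linarith) i
      have hT : ∀ i : Fin N, α i = 2 ↔ N - l ≤ (i : ℕ) := by
        intro i
        rw [show (α i = 2) ↔ i ∈ T by simp [hTdef]]
        exact up_card T (by
          intro i j hij hi
          simp only [hTdef, mem_filter, mem_univ, true_and] at hi ⊢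
          have := hmono hij
          have := hub j
          linarith) i
      have hklN : k + l ≤ N := by
        have hdisj : Disjoint Z T := by
          rw [Finset.disjoint_left]
          intro i hi ht
          simp only [hZdef, hTdef, mem_filter, mem_univ, true_and] at hi ht
          rw [hi] at ht; norm_num at ht
        have := Finset.card_le_card (Finset.subset_univ (Z ∪ T))
        rw [Finset.card_union_of_disjoint hdisj, Finset.card_univ, Fintype.card_fin] at this
        omega
      rcases eq_or_lt_of_le hklN with hcase | hcase
      · -- middle empty : k + l = N
        have hZT : ∀ i : Fin N, α i = 0 ∨ α i = 2 := by
          intro i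
          by_cases h : (i : ℕ) < k
          · exact Or.inl ((hZ i).mpr h)
          · exact Or.inr ((hT i).mpr (by omega))
        have hsum2 : ∑ i, α i = 2 * (l : ℝ) := by
          rw [sum_three k l (by omega) (by omega) α 0
            (fun i hi => (hZ i).mpr hi)
            (fun i h1 h2 => by omega)
            (fun i hi => (hT i).mpr hi)]
          ring
        have hNl : (N : ℝ) = 2 * l := by rw [← hsum, hsum2]
        have hN2l : N = 2 * l := by exact_mod_cast hNl
        have hl1 : 1 ≤ l := by omega
        refine ⟨k, l - 1, by omega, ?_, ?_⟩
        · have hnum : (N : ℝ) - 2 * ((l - 1 : ℕ) : ℝ) = 2 := by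
            rw [Nat.cast_sub hl1]; push_cast; linarith
          have hden : (N : ℝ) - k - ((l - 1 : ℕ) : ℝ) = 1 := by
            rw [Nat.cast_sub hl1]
            have : (k : ℝ) + l = N := by exact_mod_cast hcase
            push_cast; linarith
          rw [hnum, hden]
          norm_num
        · have hnum : (N : ℝ) - 2 * ((l - 1 : ℕ) : ℝ) = 2 := by
            rw [Nat.cast_sub hl1]; push_cast; linarith
          have hden : (N : ℝ) - k - ((l - 1 : ℕ) : ℝ) = 1 := by
            rw [Nat.cast_sub hl1]
            have : (k : ℝ) + l = N := by exact_mod_cast hcase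
            push_cast; linarith
          funext i
          rcases hZT i with h | h
          · rw [h, if_pos ((hZ i).mp h)]
          · rw [h]
            rw [if_neg (fun hc => by have := (hZ i).mpr hc; rw [h] at this; norm_num at this)]
            split_ifs with h2
            · rw [hnum, hden]; norm_num
            · rfl
      · -- middle nonempty : k + l < N
        have hkN : k < N := by omega
        set i0 : Fin N := ⟨k, hkN⟩ with hi0
        set m : ℝ := α i0 with hm
        have hm0 : 0 < m := by
          rcases lt_or_eq_of_le (hlb i0) with h | h
          · exact h
          · exfalso; have := (hZ i0).mp h.symm; simp [hi0] at this
        have hm2 : m < 2 := by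
          rcases lt_or_eq_of_le (hub i0) with h | h
          · exact h
          · exfalso; have := (hT i0).mp h; simp [hi0] at this; omega
        have hmle : ∀ j : Fin N, α j ≠ 0 → m ≤ α j := by
          intro j hj
          have hkj : k ≤ (j : ℕ) := by
            by_contra h
            exact hj ((hZ j).mpr (by omega))
          exact hmono (show i0 ≤ j from by rw [Fin.le_def]; exact hkj)
        -- the key claim: no middle value other than m
        have hconst : ∀ j : Fin N, m < α j → α j < 2 → False := by
          intro jw hjw1 hjw2
          set A : Finset (Fin N) := univ.filter (fun j => α j = m) with hAdef
          set B : Finset (Fin N) := univ.filter (fun j => m < α j ∧ α j < 2) with hBdef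
          have hAne : A.Nonempty := ⟨i0, by simp [hAdef]; rfl⟩
          have hBne : B.Nonempty := ⟨jw, by simp [hBdef]; exact ⟨hjw1, hjw2⟩⟩
          set b0 := B.min' hBne with hb0def
          set b1 := B.max' hBne with hb1def
          set m' : ℝ := α b0 with hm'
          set M : ℝ := α b1 with hM
          have hBlo : ∀ j ∈ B, m' ≤ α j := fun j hj => hmono (B.min'_le j hj)
          have hBhi : ∀ j ∈ B, α j ≤ M := fun j hj => hmono (B.le_max' j hj)
          have hb0B : b0 ∈ B := B.min'_mem hBne
          have hb1B : b1 ∈ B := B.max'_mem hBne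
          have hm'm : m < m' := by
            simp only [hBdef, mem_filter] at hb0B; exact hb0B.2.1
          have hM2 : M < 2 := by
            simp only [hBdef, mem_filter] at hb1B; exact hb1B.2.2
          have hm'M : m' ≤ M := hBlo b1 hb1B
          set ca := A.card with hca
          set cb := B.card with hcb
          have hca0 : 0 < ca := Finset.card_pos.mpr hAne
          have hcb0 : 0 < cb := Finset.card_pos.mpr hBne
          set c0 : ℝ := min (min m (2 - m)) (min (m' - m) (min m' (2 - M))) with hc0def
          have hc0 : 0 < c0 := by
            simp only [hc0def, lt_min_iff]
            refine ⟨⟨hm0, by linarith⟩, by linarith, by linarith, by linarith⟩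
          set ε : ℝ := c0 / (ca + cb) with hεdef
          have hcacb : (0:ℝ) < (ca : ℝ) + cb := add_pos (Nat.cast_pos.mpr hca0) (Nat.cast_pos.mpr hcb0)
          have hε : 0 < ε := div_pos hc0 hcacb
          set δ₁ : ℝ := ε * cb with hδ₁def
          set δ₂ : ℝ := ε * ca with hδ₂def
          have hδ₁ : 0 < δ₁ := mul_pos hε (Nat.cast_pos.mpr hcb0)
          have hδ₂ : 0 < δ₂ := mul_pos hε (Nat.cast_pos.mpr hca0)
          have hδsum : δ₁ + δ₂ = c0 := by
            have h1 : δ₁ + δ₂ = ε * ((ca : ℝ) + cb) := by rw [hδ₁def, hδ₂def]; ring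
            rw [h1, hεdef, div_mul_cancel₀ _ (ne_of_gt hcacb)]
          have hbd1 : δ₁ + δ₂ ≤ m' - m := by
            rw [hδsum, hc0def]
            exact le_trans (min_le_right _ _) (min_le_left _ _)
          have hbd2 : δ₁ ≤ m := by
            have : c0 ≤ m := le_trans (min_le_left _ _) (min_le_left _ _)
            linarith
          have hbd3 : δ₁ ≤ 2 - m := by
            have : c0 ≤ 2 - m := le_trans (min_le_left _ _) (min_le_right _ _)
            linarith
          have hbd4 : δ₂ ≤ m' := by
            have : c0 ≤ m' := le_trans (min_le_right _ _)
              (le_trans (min_le_right _ _) (min_le_left _ _))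
            linarith
          have hbd5 : δ₂ ≤ 2 - M := by
            have : c0 ≤ 2 - M := le_trans (min_le_right _ _)
              (le_trans (min_le_right _ _) (min_le_right _ _))
            linarith
          set d : Fin N → ℝ := fun j => if α j = m then δ₁
            else if m < α j ∧ α j < 2 then -δ₂ else 0 with hddef
          have hd : ∀ j : Fin N, (α j = 0 ∧ d j = 0) ∨ (α j = m ∧ d j = δ₁) ∨
              ((m' ≤ α j ∧ α j ≤ M) ∧ d j = -δ₂) ∨ (α j = 2 ∧ d j = 0) := by
            intro j
            by_cases h1 : α j = m
            · exact Or.inr (Or.inl ⟨h1, by rw [hddef]; simp [h1]⟩)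
            by_cases h2 : α j = 0
            · refine Or.inl ⟨h2, ?_⟩
              rw [hddef]; simp only
              rw [if_neg h1, if_neg (by rw [h2]; push_neg; intro h; linarith)]
            by_cases h3 : α j = 2
            · refine Or.inr (Or.inr (Or.inr ⟨h3, ?_⟩))
              rw [hddef]; simp only
              rw [if_neg h1, if_neg (by rw [h3]; push_neg; intro h; linarith)]
            · have hmj : m < α j := lt_of_le_of_ne (hmle j h2) (Ne.symm h1)
              have hj2 : α j < 2 := lt_of_le_of_ne (hub j) h3
              have hjB : j ∈ B := by simp [hBdef]; exact ⟨hmj, hj2⟩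
              refine Or.inr (Or.inr (Or.inl ⟨⟨hBlo j hjB, hBhi j hjB⟩, ?_⟩))
              rw [hddef]; simp only
              rw [if_neg h1, if_pos ⟨hmj, hj2⟩]
          set x : Fin N → ℝ := fun j => α j + d j with hxdef
          set y : Fin N → ℝ := fun j => α j - d j with hydef
          have hsumd : ∑ j, d j = 0 := by
            have hpt : ∀ j : Fin N, d j = (if j ∈ A then δ₁ else 0) +
                (if j ∈ B then -δ₂ else 0) := by
              intro j
              by_cases h1 : α j = m
              · have hjA : j ∈ A := by simp [hAdef, h1]
                have hjB : j ∉ B := by simp [hBdef]; intro h; linarith [h1.le]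
                rw [if_pos hjA, if_neg hjB, hddef]; simp [h1]
              · have hjA : j ∉ A := by simp [hAdef, h1]
                rw [if_neg hjA, hddef]; simp only [if_neg h1]
                by_cases h2 : m < α j ∧ α j < 2
                · have hjB : j ∈ B := by simp [hBdef]; exact h2
                  rw [if_pos h2, if_pos hjB]; ring
                · have hjB : j ∉ B := fun hj => h2 (by simpa [hBdef] using hj)
                  rw [if_neg h2, if_neg hjB]; ring
            rw [Finset.sum_congr rfl (fun j _ => hpt j), Finset.sum_add_distrib,
              Finset.sum_ite_mem, Finset.sum_ite_mem, Finset.univ_inter, Finset.univ_inter,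
              Finset.sum_const, Finset.sum_const, ← hca, ← hcb, nsmul_eq_mul, nsmul_eq_mul,
              hδ₁def, hδ₂def]
            ring
          have hxmem : x ∈ {α : Fin N → ℝ |
              (∀ i, 0 ≤ α i) ∧ (∀ i, α i ≤ 2) ∧ Monotone α ∧ ∑ i, α i = N} := by
            refine ⟨?_, ?_, ?_, ?_⟩
            · intro j
              rcases hd j with ⟨h1, h2⟩ | ⟨h1, h2⟩ | ⟨⟨h1, h1'⟩, h2⟩ | ⟨h1, h2⟩ <;>
                simp only [hxdef] <;> rw [h2] <;> linarith
            · intro j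
              rcases hd j with ⟨h1, h2⟩ | ⟨h1, h2⟩ | ⟨⟨h1, h1'⟩, h2⟩ | ⟨h1, h2⟩ <;>
                simp only [hxdef] <;> rw [h2] <;> linarith
            · intro i j hij
              have hαm : α i ≤ α j := hmono hij
              rcases hd i with ⟨hi1, hi2⟩ | ⟨hi1, hi2⟩ | ⟨⟨hi1, hi1'⟩, hi2⟩ | ⟨hi1, hi2⟩ <;>
                rcases hd j with ⟨hj1, hj2⟩ | ⟨hj1, hj2⟩ | ⟨⟨hj1, hj1'⟩, hj2⟩ | ⟨hj1, hj2⟩ <;>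
                simp only [hxdef] <;> rw [hi2, hj2] <;> linarith
            · simp only [hxdef]
              rw [Finset.sum_add_distrib, hsum, hsumd, add_zero]
          have hymem : y ∈ {α : Fin N → ℝ |
              (∀ i, 0 ≤ α i) ∧ (∀ i, α i ≤ 2) ∧ Monotone α ∧ ∑ i, α i = N} := by
            refine ⟨?_, ?_, ?_, ?_⟩
            · intro j
              rcases hd j with ⟨h1, h2⟩ | ⟨h1, h2⟩ | ⟨⟨h1, h1'⟩, h2⟩ | ⟨h1, h2⟩ <;>
                simp only [hydef] <;> rw [h2] <;> linarith
            · intro j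
              rcases hd j with ⟨h1, h2⟩ | ⟨h1, h2⟩ | ⟨⟨h1, h1'⟩, h2⟩ | ⟨h1, h2⟩ <;>
                simp only [hydef] <;> rw [h2] <;> linarith
            · intro i j hij
              have hαm : α i ≤ α j := hmono hij
              rcases hd i with ⟨hi1, hi2⟩ | ⟨hi1, hi2⟩ | ⟨⟨hi1, hi1'⟩, hi2⟩ | ⟨hi1, hi2⟩ <;>
                rcases hd j with ⟨hj1, hj2⟩ | ⟨hj1, hj2⟩ | ⟨⟨hj1, hj1'⟩, hj2⟩ | ⟨hj1, hj2⟩ <;>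
                simp only [hydef] <;> rw [hi2, hj2] <;> linarith
            · simp only [hydef]
              rw [Finset.sum_sub_distrib, hsum, hsumd, sub_zero]
          have hxeq := hext x hxmem y hymem ⟨1/2, 1/2, by norm_num, by norm_num, by norm_num,
            by funext j; simp only [hxdef, hydef, Pi.add_apply, Pi.smul_apply, smul_eq_mul]; ring⟩
          have hcontra := congrFun hxeq.1 b0
          have hdb0 : d b0 = -δ₂ := by
            rcases hd b0 with ⟨h1, h2⟩ | ⟨h1, h2⟩ | ⟨⟨h1, h1'⟩, h2⟩ | ⟨h1, h2⟩
            · simp only [hBdef, mem_filter] at hb0B; linarith [hb0B.2.1, hb0B.2.2]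
            · linarith [hm'm]
            · exact h2
            · simp only [hBdef, mem_filter] at hb0B; linarith [hb0B.2.2]
          simp only [hxdef] at hcontra
          rw [hdb0] at hcontra
          linarith
        -- now all middle values equal m
        have hmid : ∀ i : Fin N, k ≤ (i : ℕ) → (i : ℕ) < N - l → α i = m := by
          intro i h1 h2
          have hne0 : α i ≠ 0 := fun h => by have := (hZ i).mp h; omega
          have hne2 : α i ≠ 2 := fun h => by have := (hT i).mp h; omega
          by_contra h
          exact hconst i (lt_of_le_of_ne (hmle i hne0) (Ne.symm h))
            (lt_of_le_of_ne (hub i) hne2)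
        have hcast : ((N - l - k : ℕ) : ℝ) = (N : ℝ) - k - l := by
          rw [Nat.cast_sub (by omega : k ≤ N - l), Nat.cast_sub (by omega : l ≤ N)]
          ring
        have hNlr : ((N : ℝ) - k - l) ≠ 0 := by
          have : (k : ℝ) + l < N := by exact_mod_cast hcase
          linarith
        have hsum3 : ((N : ℝ) - k - l) * m + 2 * l = N := by
          rw [← hcast, ← sum_three k l (by omega) (by omega) α m
            (fun i hi => (hZ i).mpr hi) hmid (fun i hi => (hT i).mpr hi), hsum]
        have ham : ((N : ℝ) - 2 * l) / ((N : ℝ) - k - l) = m := by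
          rw [eq_comm, eq_div_iff hNlr]
          linarith
        refine ⟨k, l, hcase, ?_, ?_⟩
        · rw [ham]
          exact ⟨hm0.le, hm2.le⟩
        · funext i
          rw [ham]
          by_cases h1 : (i : ℕ) < k
          · rw [if_pos h1]; exact (hZ i).mpr h1
          · rw [if_neg h1]
            by_cases h2 : (i : ℕ) < N - l
            · rw [if_pos h2]; exact hmid i (by omega) h2
            · rw [if_neg h2]; exact (hT i).mpr (by omega)
  · -- points of the given form are extreme
    rintro α ⟨k, l, hkl, ⟨ha0, ha2⟩, rfl⟩
    set a : ℝ := ((N : ℝ) - 2 * l) / ((N : ℝ) - k - l) with ha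
    set α : Fin N → ℝ := fun i : Fin N => if (i : ℕ) < k then 0
        else if (i : ℕ) < N - l then a else 2 with hα
    have hkNl : k < N - l := by omega
    have hlN : l ≤ N := by omega
    have hkN : k < N := by omega
    have hNlr : ((N : ℝ) - k - l) ≠ 0 := by
      have : (k : ℝ) + l < N := by exact_mod_cast hkl
      linarith
    -- value lemmas
    have v0 : ∀ i : Fin N, (i : ℕ) < k → α i = 0 := by
      intro i hi; simp only [hα, if_pos hi]
    have vc : ∀ i : Fin N, k ≤ (i : ℕ) → (i : ℕ) < N - l → α i = a := by
      intro i h1 h2; simp only [hα]; rw [if_neg (by omega), if_pos h2]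
    have v2 : ∀ i : Fin N, N - l ≤ (i : ℕ) → α i = 2 := by
      intro i h1; simp only [hα]; rw [if_neg (by omega), if_neg (by omega)]
    have hcast : ((N - l - k : ℕ) : ℝ) = (N : ℝ) - k - l := by
      rw [Nat.cast_sub (by omega : k ≤ N - l), Nat.cast_sub hlN]
      ring
    have hmul : ((N : ℝ) - k - l) * a = (N : ℝ) - 2 * l := by
      rw [ha]; field_simp
    have hsumα : ∑ i, α i = (N : ℝ) := by
      rw [sum_three k l hkNl.le hlN α a v0 vc v2, hcast, hmul]; ring
    have hmem : α ∈ {α : Fin N → ℝ |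
        (∀ i, 0 ≤ α i) ∧ (∀ i, α i ≤ 2) ∧ Monotone α ∧ ∑ i, α i = N} := by
      refine ⟨?_, ?_, ?_, hsumα⟩
      · intro i; simp only [hα]; split_ifs <;> norm_num [ha0]
      · intro i; simp only [hα]; split_ifs <;> norm_num [ha2]
      · intro i j hij
        have hij' : (i : ℕ) ≤ (j : ℕ) := hij
        simp only [hα]
        split_ifs <;> first | rfl | linarith | omega
    rw [mem_extremePoints]
    refine ⟨hmem, ?_⟩
    rintro x hx y hy ⟨t, s, ht, hs, hts, heq⟩
    obtain ⟨hx0, hx2, hxm, hxs⟩ := hx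
    obtain ⟨hy0, hy2, hym, hys⟩ := hy
    have hpt : ∀ i, t * x i + s * y i = α i := by
      intro i
      have := congrFun heq i
      simpa [Pi.add_apply, Pi.smul_apply, smul_eq_mul] using this
    -- ends
    have hz : ∀ i : Fin N, (i : ℕ) < k → x i = 0 ∧ y i = 0 := by
      intro i hi
      have h := hpt i
      rw [v0 i hi] at h
      exact conv_zero ht hs (hx0 i) (hy0 i) h
    have h2e : ∀ i : Fin N, N - l ≤ (i : ℕ) → x i = 2 ∧ y i = 2 := by
      intro i hi
      have h := hpt i
      rw [v2 i hi] at h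
      exact conv_two ht hs hts (hx2 i) (hy2 i) h
    -- middle constancy of x
    set c : ℝ := x ⟨k, hkN⟩ with hc
    have key : ∀ j, ∀ (hj : k ≤ j) (hj2 : j < N - l), x ⟨j, by omega⟩ = c := by
      intro j hj
      induction j, hj using Nat.le_induction with
      | base => intro _; rfl
      | succ j hkj ih =>
        intro hj1
        have hjm : j < N - l := by omega
        have pj : j < N := by omega
        have pj1 : j + 1 < N := by omega
        have hsame : t * x ⟨j, pj⟩ + s * y ⟨j, pj⟩
            = t * x ⟨j + 1, pj1⟩ + s * y ⟨j + 1, pj1⟩ := by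
          rw [hpt ⟨j, pj⟩, hpt ⟨j + 1, pj1⟩, vc ⟨j, pj⟩ hkj hjm,
            vc ⟨j + 1, pj1⟩ (show k ≤ j + 1 by omega) hj1]
        have hle : (⟨j, pj⟩ : Fin N) ≤ ⟨j + 1, pj1⟩ := by
          simp [Fin.le_def]
        obtain ⟨hxe, -⟩ := conv_eqd ht hs (hxm hle) (hym hle) hsame
        rw [← hxe]
        exact ih hjm
    have keyx : ∀ i : Fin N, k ≤ (i : ℕ) → (i : ℕ) < N - l → x i = c := by
      intro i h1 h2
      have := key i h1 h2
      simpa using this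
    -- sum forces c = a
    have hsumx : ∑ i, x i = ((N : ℝ) - k - l) * c + 2 * l := by
      rw [sum_three k l hkNl.le hlN x c (fun i hi => (hz i hi).1) keyx
        (fun i hi => (h2e i hi).1), hcast]
    have hca : c = a := by
      have h1 : ((N : ℝ) - k - l) * c = ((N : ℝ) - k - l) * a := by
        rw [hmul]; rw [hxs] at hsumx; linarith
      exact mul_left_cancel₀ hNlr h1
    have hxα : x = α := by
      funext i
      rcases lt_or_ge (i : ℕ) k with h | h
      · rw [(hz i h).1, v0 i h]
      · rcases lt_or_ge (i : ℕ) (N - l) with h2 | h2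
        · rw [keyx i h h2, hca, vc i h h2]
        · rw [(h2e i h2).1, v2 i h2]
    refine ⟨hxα, ?_⟩
    funext i
    have h := hpt i
    rw [hxα] at h
    have hh : t * α i + s * α i = α i := by rw [← add_mul, hts, one_mul]
    have : s * y i = s * α i := by linarith
    exact mul_left_cancel₀ (ne_of_gt hs) this
end

section
/- Let N ≥ 2 and j ≥ 0 be integers, and let 0 ≤ λ₁ ≤ ⋯ ≤ λ_N ≤ 2 and 0 ≤ λ'₁ ≤ ⋯ ≤ λ'_{N−j} ≤ 2 be sequences satisfying ∑ᵢλᵢ = N, ∑ᵢλ'ᵢ = N−j, and the interlacing inequalities λ_{i−k₁} ≤ λ'ᵢ ≤ λ_{i+k₂} for all i = 1,…,N−j (with the convention λᵢ = 0 for i ≤ 0 and λᵢ = 2 for i > N), where k₁, k₂ ≥ 0 are fixed integers. Then the 1-Wasserstein distance between the empirical measures μ = (1/N)∑ᵢ δ_{λᵢ} and μ' = (1/(N−j))∑ᵢ δ_{λ'ᵢ} satisfies d₁^W(μ, μ') ≤ 2(k₁ + k₂ + j + 1)/N. -/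
open MeasureTheory ENNReal

/-- The `p`-Wasserstein distance between two measures on `ℝ`, defined as the
infimum of transport costs over all couplings. -/
noncomputable def wassersteinDist (p : ℝ) (μ ν : Measure ℝ) : ℝ :=
  sInf {c : ℝ | ∃ π : Measure (ℝ × ℝ),
    π.map Prod.fst = μ ∧ π.map Prod.snd = ν ∧
    c = (∫ z : ℝ × ℝ, |z.1 - z.2| ^ p ∂π) ^ (1 / p)}

lemma my_sum_Icc_eq_range {α : Type*} [AddCommMonoid α] (K : ℕ) (f : ℤ → α) :
    ∑ i ∈ Finset.Icc (1:ℤ) (K:ℤ), f i = ∑ k ∈ Finset.range K, f ((k:ℤ)+1) := by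
  have h : Finset.Icc (1:ℤ) (K:ℤ) = (Finset.range K).image (fun k : ℕ => (k:ℤ)+1) := by
    ext i
    simp only [Finset.mem_Icc, Finset.mem_image, Finset.mem_range]
    constructor
    · intro hi; exact ⟨(i-1).toNat, by omega, by omega⟩
    · rintro ⟨k, hk, rfl⟩; omega
  rw [h, Finset.sum_image]
  intro a _ b _ hab; have h' : (a:ℤ) + 1 = (b:ℤ) + 1 := hab; omega

lemma my_tele (K : ℕ) (g : ℤ → ℤ) :
    ∑ i ∈ Finset.Icc (1:ℤ) (K:ℤ), (g i - g (i-1)) = g K - g 0 := by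
  rw [my_sum_Icc_eq_range]
  have h := Finset.sum_range_sub (fun k : ℕ => g (k:ℤ)) K
  push_cast at h
  rw [← h]
  apply Finset.sum_congr rfl; intro k _
  congr 2
  ring

lemma my_ov_sum (A B d : ℤ) (K : ℕ) (hAB : A ≤ B) (hA : 0 ≤ A) (hB : B ≤ (K:ℤ)*d)
    (hd : 0 ≤ d) :
    ∑ i ∈ Finset.Icc (1:ℤ) (K:ℤ), max 0 (min B (i*d) - max A ((i-1)*d)) = B - A := by
  set F : ℤ → ℤ := fun x => min B (max A (x*d)) with hF
  have hpt : ∀ i ∈ Finset.Icc (1:ℤ) (K:ℤ),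
      max 0 (min B (i*d) - max A ((i-1)*d)) = F i - F (i-1) := by
    intro i _
    have hxy : (i-1)*d ≤ i*d := mul_le_mul_of_nonneg_right (by omega) hd
    simp only [hF]
    revert hxy
    generalize (i-1)*d = x
    generalize i*d = y
    intro hxy
    omega
  rw [Finset.sum_congr rfl hpt, my_tele K F]
  have h1 : F (K:ℤ) = B := by
    simp only [hF]
    revert hB
    generalize (K:ℤ)*d = P
    intro hB
    omega
  have h2 : F 0 = A := by simp only [hF, zero_mul]; omega
  rw [h1, h2]

lemma my_map_sum {ι α β : Type*} [MeasurableSpace α] [MeasurableSpace β]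
    (s : Finset ι) (μ : ι → Measure α) {f : α → β} (hf : Measurable f) :
    (∑ i ∈ s, μ i).map f = ∑ i ∈ s, (μ i).map f := by
  classical
  induction s using Finset.cons_induction_on with
  | empty => simp
  | cons _ _ ha ih => rw [Finset.sum_cons, Finset.sum_cons, Measure.map_add _ _ hf, ih]

lemma my_integrable_dirac {α E : Type*} [MeasurableSpace α] [MeasurableSingletonClass α]
    [NormedAddCommGroup E] (f : α → E) (a : α) : Integrable f (Measure.dirac a) := by
  have h : (fun _ : α => f a) =ᵐ[Measure.dirac a] f := by
    rw [Filter.EventuallyEq, ae_dirac_eq]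
    exact Filter.eventually_pure.mpr rfl
  exact (integrable_const (f a)).congr h

theorem stmt_19 (N j k₁ k₂ : ℕ) (hN : 2 ≤ N) (hj : j < N)
    (lam lam' : ℤ → ℝ)
    -- conventions: the sequences are extended by `0` below and `2` above
    (hlam0 : ∀ i : ℤ, i ≤ 0 → lam i = 0) (hlam2 : ∀ i : ℤ, (N : ℤ) < i → lam i = 2)
    (hlam'0 : ∀ i : ℤ, i ≤ 0 → lam' i = 0)
    (hlam'2 : ∀ i : ℤ, (N : ℤ) - (j : ℤ) < i → lam' i = 2)
    -- monotonicity and range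
    (hlam_mono : ∀ i i' : ℤ, 1 ≤ i → i ≤ i' → i' ≤ (N : ℤ) → lam i ≤ lam i')
    (hlam'_mono : ∀ i i' : ℤ, 1 ≤ i → i ≤ i' → i' ≤ (N : ℤ) - (j : ℤ) → lam' i ≤ lam' i')
    (hlam_range : ∀ i : ℤ, 1 ≤ i → i ≤ (N : ℤ) → lam i ∈ Set.Icc (0:ℝ) 2)
    (hlam'_range : ∀ i : ℤ, 1 ≤ i → i ≤ (N : ℤ) - (j : ℤ) → lam' i ∈ Set.Icc (0:ℝ) 2)
    -- trace conditions
    (hlam_sum : ∑ i ∈ Finset.Icc (1 : ℤ) (N : ℤ), lam i = N)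
    (hlam'_sum : ∑ i ∈ Finset.Icc (1 : ℤ) ((N : ℤ) - (j : ℤ)), lam' i = (N : ℝ) - (j : ℝ))
    -- interlacing inequalities
    (hinter : ∀ i : ℤ, 1 ≤ i → i ≤ (N : ℤ) - (j : ℤ) →
      lam (i - (k₁ : ℤ)) ≤ lam' i ∧ lam' i ≤ lam (i + (k₂ : ℤ))) :
    wassersteinDist 1
      (((N : ℝ≥0∞))⁻¹ • ∑ i ∈ Finset.Icc (1 : ℤ) (N : ℤ), Measure.dirac (lam i))
      ((((N : ℝ≥0∞) - (j : ℝ≥0∞)))⁻¹ •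
        ∑ i ∈ Finset.Icc (1 : ℤ) ((N : ℤ) - (j : ℤ)), Measure.dirac (lam' i))
      ≤ 2 * ((k₁ : ℝ) + k₂ + j + 1) / N := by
  classical
  set m : ℕ := N - j with hmdef
  have hm1 : 1 ≤ m := by omega
  have hMz : ((N:ℤ) - (j:ℤ)) = (m:ℤ) := by omega
  have hE : ((N : ℝ≥0∞) - (j : ℝ≥0∞)) = ((m:ℕ) : ℝ≥0∞) := by
    rw [hmdef]; exact (ENNReal.natCast_sub N j).symm
  rw [hMz, hE]
  -- global bounds and monotonicity for the extended sequence lam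
  have gb : ∀ a : ℤ, 0 ≤ lam a ∧ lam a ≤ 2 := by
    intro a
    rcases le_or_gt a 0 with h | h
    · rw [hlam0 a h]; norm_num
    · rcases le_or_gt a (N:ℤ) with h2 | h2
      · exact ⟨(hlam_range a (by omega) h2).1, (hlam_range a (by omega) h2).2⟩
      · rw [hlam2 a h2]; norm_num
  have gmono : ∀ a b : ℤ, a ≤ b → lam a ≤ lam b := by
    intro a b hab
    rcases le_or_gt a 0 with h | h
    · rw [hlam0 a h]; exact (gb b).1
    · rcases le_or_gt b (N:ℤ) with h2 | h2
      · exact hlam_mono a b (by omega) hab h2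
      · rw [hlam2 b h2]; exact (gb a).2
  -- weights
  set w : ℤ → ℤ → ℤ := fun i i' =>
    max 0 (min (i*(m:ℤ)) (i'*(N:ℤ)) - max ((i-1)*(m:ℤ)) ((i'-1)*(N:ℤ))) with hw
  set wn : ℤ → ℤ → ℕ := fun i i' => (w i i').toNat with hwn
  have hwnn : ∀ i i', 0 ≤ w i i' := by intro i i'; rw [hw]; exact le_max_left _ _
  have hwcast : ∀ i i', (wn i i' : ℤ) = w i i' := by
    intro i i'; rw [hwn]; exact Int.toNat_of_nonneg (hwnn i i')
  have hNzpos : (0:ℤ) < (N:ℤ) := by omega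
  have hrow : ∀ i ∈ Finset.Icc (1:ℤ) (N:ℤ),
      ∑ i' ∈ Finset.Icc (1:ℤ) (m:ℤ), w i i' = (m:ℤ) := by
    intro i hi
    rw [Finset.mem_Icc] at hi
    have h := my_ov_sum ((i-1)*(m:ℤ)) (i*(m:ℤ)) (N:ℤ) m
      (mul_le_mul_of_nonneg_right (by omega) (by positivity))
      (mul_nonneg (by omega) (by positivity))
      (by
        have : i*(m:ℤ) ≤ (N:ℤ)*(m:ℤ) := mul_le_mul_of_nonneg_right hi.2 (by positivity)
        nlinarith)
      (by positivity)
    calc ∑ i' ∈ Finset.Icc (1:ℤ) (m:ℤ), w i i'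
        = ∑ x ∈ Finset.Icc (1:ℤ) (m:ℤ),
            max 0 (min (i*(m:ℤ)) (x*(N:ℤ)) - max ((i-1)*(m:ℤ)) ((x-1)*(N:ℤ))) := by
          apply Finset.sum_congr rfl; intro x _; rw [hw]
      _ = i*(m:ℤ) - (i-1)*(m:ℤ) := h
      _ = (m:ℤ) := by ring
  have hcol : ∀ i' ∈ Finset.Icc (1:ℤ) (m:ℤ),
      ∑ i ∈ Finset.Icc (1:ℤ) (N:ℤ), w i i' = (N:ℤ) := by
    intro i' hi'
    rw [Finset.mem_Icc] at hi'
    have h := my_ov_sum ((i'-1)*(N:ℤ)) (i'*(N:ℤ)) (m:ℤ) N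
      (mul_le_mul_of_nonneg_right (by omega) (by positivity))
      (mul_nonneg (by omega) (by positivity))
      (by
        have : i'*(N:ℤ) ≤ (m:ℤ)*(N:ℤ) := mul_le_mul_of_nonneg_right hi'.2 (by positivity)
        nlinarith)
      (by positivity)
    calc ∑ i ∈ Finset.Icc (1:ℤ) (N:ℤ), w i i'
        = ∑ x ∈ Finset.Icc (1:ℤ) (N:ℤ),
            max 0 (min (i'*(N:ℤ)) (x*(m:ℤ)) - max ((i'-1)*(N:ℤ)) ((x-1)*(m:ℤ))) := by
          apply Finset.sum_congr rfl; intro x _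
          simp only [hw]
          rw [min_comm (x*(m:ℤ)) (i'*(N:ℤ)), max_comm ((x-1)*(m:ℤ)) ((i'-1)*(N:ℤ))]
      _ = i'*(N:ℤ) - (i'-1)*(N:ℤ) := h
      _ = (N:ℤ) := by ring
  have hrowN : ∀ i ∈ Finset.Icc (1:ℤ) (N:ℤ),
      ∑ i' ∈ Finset.Icc (1:ℤ) (m:ℤ), wn i i' = m := by
    intro i hi
    have h := hrow i hi
    have h2 : ((∑ i' ∈ Finset.Icc (1:ℤ) (m:ℤ), wn i i' : ℕ) : ℤ) = ((m:ℕ):ℤ) := by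
      rw [Nat.cast_sum]
      simp only [hwcast]
      exact h
    exact_mod_cast h2
  have hcolN : ∀ i' ∈ Finset.Icc (1:ℤ) (m:ℤ),
      ∑ i ∈ Finset.Icc (1:ℤ) (N:ℤ), wn i i' = N := by
    intro i' hi'
    have h := hcol i' hi'
    have h2 : ((∑ i ∈ Finset.Icc (1:ℤ) (N:ℤ), wn i i' : ℕ) : ℤ) = ((N:ℕ):ℤ) := by
      rw [Nat.cast_sum]
      simp only [hwcast]
      exact h
    exact_mod_cast h2
  -- the coupling
  set sprod := (Finset.Icc (1:ℤ) (N:ℤ)) ×ˢ (Finset.Icc (1:ℤ) (m:ℤ)) with hsprod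
  set π : Measure (ℝ × ℝ) := ((N*m : ℕ) : ℝ≥0∞)⁻¹ •
      ∑ p ∈ sprod, (wn p.1 p.2 : ℝ≥0∞) • Measure.dirac (lam p.1, lam' p.2) with hπ
  have hNne : ((N:ℕ) : ℝ≥0∞) ≠ 0 := by simp; omega
  have hmne : ((m:ℕ) : ℝ≥0∞) ≠ 0 := by simp; omega
  have e1 : ((N*m:ℕ) : ℝ≥0∞)⁻¹ * ((m:ℕ):ℝ≥0∞) = ((N:ℕ):ℝ≥0∞)⁻¹ := by
    rw [Nat.cast_mul, ENNReal.mul_inv (Or.inl hNne) (Or.inl (ENNReal.natCast_ne_top N)),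
      mul_assoc, ENNReal.inv_mul_cancel hmne (ENNReal.natCast_ne_top m), mul_one]
  have e2 : ((N*m:ℕ) : ℝ≥0∞)⁻¹ * ((N:ℕ):ℝ≥0∞) = ((m:ℕ):ℝ≥0∞)⁻¹ := by
    rw [Nat.cast_mul, ENNReal.mul_inv (Or.inl hNne) (Or.inl (ENNReal.natCast_ne_top N)),
      mul_comm ((N:ℝ≥0∞))⁻¹ ((m:ℝ≥0∞))⁻¹, mul_assoc,
      ENNReal.inv_mul_cancel hNne (ENNReal.natCast_ne_top N), mul_one]
  -- marginals
  have hfst : π.map Prod.fst =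
      ((N : ℝ≥0∞))⁻¹ • ∑ i ∈ Finset.Icc (1 : ℤ) (N : ℤ), Measure.dirac (lam i) := by
    rw [hπ, Measure.map_smul, my_map_sum _ _ measurable_fst]
    have h1 : ∀ p ∈ sprod,
        ((wn p.1 p.2 : ℝ≥0∞) • Measure.dirac ((lam p.1, lam' p.2) : ℝ × ℝ)).map Prod.fst
          = (wn p.1 p.2 : ℝ≥0∞) • Measure.dirac (lam p.1) := by
      intro p _
      rw [Measure.map_smul, Measure.map_dirac' measurable_fst]
    rw [Finset.sum_congr rfl h1, hsprod, Finset.sum_product]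
    have h2 : ∀ i ∈ Finset.Icc (1:ℤ) (N:ℤ),
        ∑ i' ∈ Finset.Icc (1:ℤ) (m:ℤ), (wn i i' : ℝ≥0∞) • Measure.dirac (lam i)
          = ((m:ℕ) : ℝ≥0∞) • Measure.dirac (lam i) := by
      intro i hi
      rw [← Finset.sum_smul]
      congr 1
      rw [← Nat.cast_sum]
      exact_mod_cast congrArg (fun n : ℕ => (n : ℝ≥0∞)) (hrowN i hi)
    rw [Finset.sum_congr rfl h2, ← Finset.smul_sum, smul_smul, e1]
  have hsnd : π.map Prod.snd =
      (((m:ℕ) : ℝ≥0∞))⁻¹ • ∑ i ∈ Finset.Icc (1 : ℤ) (m : ℤ), Measure.dirac (lam' i) := by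
    rw [hπ, Measure.map_smul, my_map_sum _ _ measurable_snd]
    have h1 : ∀ p ∈ sprod,
        ((wn p.1 p.2 : ℝ≥0∞) • Measure.dirac ((lam p.1, lam' p.2) : ℝ × ℝ)).map Prod.snd
          = (wn p.1 p.2 : ℝ≥0∞) • Measure.dirac (lam' p.2) := by
      intro p _
      rw [Measure.map_smul, Measure.map_dirac' measurable_snd]
    rw [Finset.sum_congr rfl h1, hsprod, Finset.sum_product, Finset.sum_comm]
    have h2 : ∀ i' ∈ Finset.Icc (1:ℤ) (m:ℤ),
        ∑ i ∈ Finset.Icc (1:ℤ) (N:ℤ), (wn i i' : ℝ≥0∞) • Measure.dirac (lam' i')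
          = ((N:ℕ) : ℝ≥0∞) • Measure.dirac (lam' i') := by
      intro i' hi'
      rw [← Finset.sum_smul]
      congr 1
      rw [← Nat.cast_sum]
      exact_mod_cast congrArg (fun n : ℕ => (n : ℝ≥0∞)) (hcolN i' hi')
    rw [Finset.sum_congr rfl h2, ← Finset.smul_sum, smul_smul, e2]
  -- cost
  have hint : ∀ p ∈ sprod,
      Integrable (fun z : ℝ × ℝ => |z.1 - z.2|)
        ((wn p.1 p.2 : ℝ≥0∞) • Measure.dirac ((lam p.1, lam' p.2) : ℝ × ℝ)) := by
    intro p _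
    exact (my_integrable_dirac _ _).smul_measure (ENNReal.natCast_ne_top _)
  have hcost : ∫ z : ℝ × ℝ, |z.1 - z.2| ∂π =
      (((N*m:ℕ) : ℝ))⁻¹ * ∑ p ∈ sprod, (wn p.1 p.2 : ℝ) * |lam p.1 - lam' p.2| := by
    rw [hπ, integral_smul_measure, integral_finset_sum_measure hint]
    rw [ENNReal.toReal_inv, ENNReal.toReal_natCast, smul_eq_mul]
    congr 1
    apply Finset.sum_congr rfl; intro p _
    rw [integral_smul_measure, integral_dirac, ENNReal.toReal_natCast, smul_eq_mul]
  -- shift estimates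
  set S : ℤ → ℝ := fun c => ∑ k ∈ Finset.range N, lam ((k:ℤ) + 1 + c) with hS
  have hIccS : ∀ c : ℤ, ∑ i ∈ Finset.Icc (1:ℤ) (N:ℤ), lam (i + c) = S c := by
    intro c
    rw [hS]
    exact my_sum_Icc_eq_range N (fun i => lam (i + c))
  have hS0 : S 0 = (N:ℝ) := by
    have h := hIccS 0
    simp only [add_zero] at h
    rw [← h, hlam_sum]
  have hstep : ∀ c : ℤ, S (c + 1) ≤ S c + 2 := by
    intro c
    have tele := Finset.sum_range_sub (fun k : ℕ => lam ((k:ℤ) + 1 + c)) N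
    push_cast at tele
    rw [Finset.sum_sub_distrib] at tele
    have e : S (c+1) = ∑ k ∈ Finset.range N, lam ((k:ℤ)+1+1+c) := by
      rw [hS]
      apply Finset.sum_congr rfl; intro k _
      congr 1; ring
    have e2 : S c = ∑ k ∈ Finset.range N, lam ((k:ℤ)+1+c) := by rw [hS]
    have h1 := (gb ((N:ℤ)+1+c)).2
    have h2 := (gb (1+c)).1
    rw [e, e2]
    linarith [tele]
  have hup : ∀ a : ℕ, S (a:ℤ) ≤ S 0 + 2*a := by
    intro a
    induction a with
    | zero => simp
    | succ n ih =>
      have h := hstep (n:ℤ)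
      have e : (((n+1):ℕ):ℤ) = (n:ℤ) + 1 := by push_cast; ring
      rw [e]
      have ecast : (((n+1):ℕ):ℝ) = (n:ℝ) + 1 := by push_cast; ring
      rw [ecast]
      linarith
  have hdown : ∀ b : ℕ, S 0 - 2*b ≤ S (-(b:ℤ)) := by
    intro b
    induction b with
    | zero => simp
    | succ n ih =>
      have h := hstep (-(((n+1):ℕ):ℤ))
      have e : (-(((n+1):ℕ):ℤ) + 1) = -(n:ℤ) := by push_cast; ring
      rw [e] at h
      have ecast : (((n+1):ℕ):ℝ) = (n:ℝ) + 1 := by push_cast; ring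
      rw [ecast]
      linarith
  -- the dominating function
  set D : ℤ → ℝ := fun i => lam (i + (k₂:ℤ)) - lam (i - (j:ℤ) - (k₁:ℤ)) with hD
  have hDsum : ∑ i ∈ Finset.Icc (1:ℤ) (N:ℤ), D i ≤ 2*((k₁:ℝ) + k₂ + j) := by
    have h1 : ∑ i ∈ Finset.Icc (1:ℤ) (N:ℤ), D i
        = (∑ i ∈ Finset.Icc (1:ℤ) (N:ℤ), lam (i + (k₂:ℤ)))
          - ∑ i ∈ Finset.Icc (1:ℤ) (N:ℤ), lam (i + (-((j+k₁:ℕ):ℤ))) := by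
      rw [← Finset.sum_sub_distrib]
      apply Finset.sum_congr rfl; intro i _
      simp only [hD]
      congr 2
      push_cast; ring
    rw [h1, hIccS, hIccS]
    have h2 := hup k₂
    have h3 := hdown (j+k₁)
    have hc : ((j+k₁:ℕ):ℝ) = (j:ℝ) + k₁ := by push_cast; ring
    linarith
  -- per-term bound
  have hterm : ∀ p ∈ sprod, (wn p.1 p.2 : ℝ) * |lam p.1 - lam' p.2|
      ≤ (wn p.1 p.2 : ℝ) * D p.1 := by
    rintro ⟨i, i'⟩ hp
    rw [hsprod, Finset.mem_product, Finset.mem_Icc, Finset.mem_Icc] at hp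
    obtain ⟨⟨hi1, hi2⟩, hi'1, hi'2⟩ := hp
    rcases Nat.eq_zero_or_pos (wn i i') with h0 | h0
    · simp [h0]
    · have hwpos : 0 < w i i' := by
        have := hwcast i i'
        omega
      have key : ∀ (a b c d : ℤ), 0 < max 0 (min a b - max c d) →
          c < a ∧ c < b ∧ d < a ∧ d < b := by
        intro a b c d h; omega
      have hw' : 0 < max 0 (min (i*(m:ℤ)) (i'*(N:ℤ))
          - max ((i-1)*(m:ℤ)) ((i'-1)*(N:ℤ))) := by
        rw [hw] at hwpos; exact hwpos
      obtain ⟨hc1, hc2, hc3, hc4⟩ := key _ _ _ _ hw'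
      -- hc2 : (i-1)*m < i'*N ;  hc3 : (i'-1)*N < i*m
      have hii1 : i' ≤ i := by
        have ha : i*(m:ℤ) ≤ i*(N:ℤ) :=
          mul_le_mul_of_nonneg_left (by omega) (by omega)
        have hb : (i'-1)*(N:ℤ) < i*(N:ℤ) := lt_of_lt_of_le hc3 ha
        have := lt_of_mul_lt_mul_right hb (by positivity : (0:ℤ) ≤ (N:ℤ))
        omega
      have hii2 : i - (j:ℤ) ≤ i' := by
        have h2' : (i-1)*((N:ℤ) - (j:ℤ)) < i'*(N:ℤ) := by rw [hMz]; exact hc2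
        have e2 : (i-1)*(j:ℤ) ≤ (N:ℤ)*(j:ℤ) :=
          mul_le_mul_of_nonneg_right (by omega) (by positivity)
        have e3 : (i-1-(j:ℤ))*(N:ℤ) < i'*(N:ℤ) := by nlinarith
        have := lt_of_mul_lt_mul_right e3 (by positivity : (0:ℤ) ≤ (N:ℤ))
        omega
      have hint' := hinter i' hi'1 (by omega)
      have b1 : lam' i' ≤ lam (i + (k₂:ℤ)) :=
        le_trans hint'.2 (gmono _ _ (by omega))
      have b2 : lam (i - (j:ℤ) - (k₁:ℤ)) ≤ lam' i' :=
        le_trans (gmono _ _ (by omega)) hint'.1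
      have b3 : lam i ≤ lam (i + (k₂:ℤ)) := gmono _ _ (by omega)
      have b4 : lam (i - (j:ℤ) - (k₁:ℤ)) ≤ lam i := gmono _ _ (by omega)
      have habs : |lam i - lam' i'| ≤ D i := by
        simp only [hD]
        rw [abs_sub_le_iff]
        constructor <;> linarith
      exact mul_le_mul_of_nonneg_left habs (by positivity)
  -- summing
  have hsum2 : ∑ p ∈ sprod, (wn p.1 p.2 : ℝ) * D p.1
      = (m:ℝ) * ∑ i ∈ Finset.Icc (1:ℤ) (N:ℤ), D i := by
    rw [hsprod, Finset.sum_product]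
    have h : ∀ i ∈ Finset.Icc (1:ℤ) (N:ℤ),
        ∑ i' ∈ Finset.Icc (1:ℤ) (m:ℤ), (wn i i' : ℝ) * D i = (m:ℝ) * D i := by
      intro i hi
      rw [← Finset.sum_mul]
      have hs : (∑ i' ∈ Finset.Icc (1:ℤ) (m:ℤ), (wn i i' : ℝ)) = (m:ℝ) := by
        rw [← Nat.cast_sum]
        exact_mod_cast congrArg (fun n : ℕ => (n:ℝ)) (hrowN i hi)
      rw [hs, mul_comm]
    rw [Finset.sum_congr rfl h, Finset.mul_sum]
  have hsum1 : ∑ p ∈ sprod, (wn p.1 p.2 : ℝ) * |lam p.1 - lam' p.2|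
      ≤ (m:ℝ) * (2*((k₁:ℝ) + k₂ + j)) := by
    calc ∑ p ∈ sprod, (wn p.1 p.2 : ℝ) * |lam p.1 - lam' p.2|
        ≤ ∑ p ∈ sprod, (wn p.1 p.2 : ℝ) * D p.1 := Finset.sum_le_sum hterm
      _ = (m:ℝ) * ∑ i ∈ Finset.Icc (1:ℤ) (N:ℤ), D i := hsum2
      _ ≤ (m:ℝ) * (2*((k₁:ℝ) + k₂ + j)) := by
          apply mul_le_mul_of_nonneg_left hDsum (by positivity)
  -- conclusion via the definition of the Wasserstein distance
  have hNR : (0:ℝ) < N := by positivity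
  have hmR : (0:ℝ) < m := by
    have : 0 < m := hm1
    positivity
  have hcost_le : ∫ z : ℝ × ℝ, |z.1 - z.2| ∂π ≤ 2 * ((k₁ : ℝ) + k₂ + j + 1) / N := by
    rw [hcost]
    have h1 : (((N*m:ℕ):ℝ))⁻¹ * ((m:ℝ) * (2*((k₁:ℝ) + k₂ + j)))
        = 2*((k₁:ℝ) + k₂ + j) / N := by
      push_cast
      field_simp
    calc (((N*m:ℕ):ℝ))⁻¹ * ∑ p ∈ sprod, (wn p.1 p.2 : ℝ) * |lam p.1 - lam' p.2|
        ≤ (((N*m:ℕ):ℝ))⁻¹ * ((m:ℝ) * (2*((k₁:ℝ) + k₂ + j))) := by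
          apply mul_le_mul_of_nonneg_left hsum1 (by positivity)
      _ = 2*((k₁:ℝ) + k₂ + j) / N := h1
      _ ≤ 2 * ((k₁ : ℝ) + k₂ + j + 1) / N :=
          (div_le_div_iff_of_pos_right hNR).mpr (by linarith)
  -- put it together
  unfold wassersteinDist
  have hbdd : BddBelow {c : ℝ | ∃ π' : Measure (ℝ × ℝ),
      π'.map Prod.fst = ((N:ℝ≥0∞))⁻¹ • ∑ i ∈ Finset.Icc (1:ℤ) (N:ℤ), Measure.dirac (lam i) ∧
      π'.map Prod.snd = (((m:ℕ):ℝ≥0∞))⁻¹ • ∑ i ∈ Finset.Icc (1:ℤ) (m:ℤ), Measure.dirac (lam' i) ∧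
      c = (∫ z : ℝ × ℝ, |z.1 - z.2| ^ (1:ℝ) ∂π') ^ (1/(1:ℝ))} := by
    refine ⟨0, ?_⟩
    rintro c ⟨π', -, -, rfl⟩
    have h1 : 0 ≤ ∫ z : ℝ × ℝ, |z.1 - z.2| ^ (1:ℝ) ∂π' :=
      integral_nonneg (fun z => by positivity)
    positivity
  have hmem : ((∫ z : ℝ × ℝ, |z.1 - z.2| ^ (1:ℝ) ∂π) ^ (1/(1:ℝ)) : ℝ) ∈
      {c : ℝ | ∃ π' : Measure (ℝ × ℝ),
      π'.map Prod.fst = ((N:ℝ≥0∞))⁻¹ • ∑ i ∈ Finset.Icc (1:ℤ) (N:ℤ), Measure.dirac (lam i) ∧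
      π'.map Prod.snd = (((m:ℕ):ℝ≥0∞))⁻¹ • ∑ i ∈ Finset.Icc (1:ℤ) (m:ℤ), Measure.dirac (lam' i) ∧
      c = (∫ z : ℝ × ℝ, |z.1 - z.2| ^ (1:ℝ) ∂π') ^ (1/(1:ℝ))} :=
    ⟨π, hfst, hsnd, rfl⟩
  refine le_trans (csInf_le hbdd hmem) ?_
  have heq : ((∫ z : ℝ × ℝ, |z.1 - z.2| ^ (1:ℝ) ∂π) ^ (1/(1:ℝ)) : ℝ)
      = ∫ z : ℝ × ℝ, |z.1 - z.2| ∂π := by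
    norm_num
  rw [heq]
  exact hcost_le
end
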